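/- arXiv:2001.11668 — 5 statements merged into one kernel-verified Lean document; each statement's English description precedes it below -/
import Mathlib

section
/- Let M be an n×n real symmetric matrix with eigendecomposition M = Σ_{i=1}^n λ_i v_i v_iᵀ, where λ_1 ≥ ... ≥ λ_n and v_1,...,v_n are orthonormal eigenvectors. Then there exists a unique scalar λ ∈ ℝ satisfying Σ_{i=1}^n max{0, λ_i − λ} = 1, and the Euclidean (Frobenius-norm) projection of M onto the spectrahedron S_n equals Π_{S_n}[M] = Σ_{i=1}^n max{0, λ_i − λ} v_i v_iᵀ. -/
open scoped BigOperators
open MeasureTheory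
open scoped Matrix

namespace LRSGD

noncomputable def frobInner {n : ℕ} (A B : Matrix (Fin n) (Fin n) ℝ) : ℝ :=
  Matrix.trace (A * Bᵀ)

noncomputable def frobNorm {n : ℕ} (A : Matrix (Fin n) (Fin n) ℝ) : ℝ :=
  Real.sqrt (∑ i, ∑ j, (A i j) ^ 2)

noncomputable def specNorm {n : ℕ} (A : Matrix (Fin n) (Fin n) ℝ) : ℝ :=
  sSup {s : ℝ | ∃ u : Fin n → ℝ, (∑ k, u k ^ 2) = 1 ∧
    s = Real.sqrt (∑ i, (A.mulVec u i) ^ 2)}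

def spectrahedron (n : ℕ) : Set (Matrix (Fin n) (Fin n) ℝ) :=
  {X | X.PosSemidef ∧ X.trace = 1}

def IsProjOn {n : ℕ} (S : Set (Matrix (Fin n) (Fin n) ℝ))
    (M P : Matrix (Fin n) (Fin n) ℝ) : Prop :=
  P ∈ S ∧ ∀ Z ∈ S, frobNorm (M - P) ≤ frobNorm (M - Z)

def IsEigenDecomp {n : ℕ} (M : Matrix (Fin n) (Fin n) ℝ)
    (lam : Fin n → ℝ) (v : Fin n → Fin n → ℝ) : Prop :=
  Antitone lam ∧
  (∀ i j, (∑ k, v i k * v j k) = if i = j then (1 : ℝ) else 0) ∧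
  M = ∑ i, lam i • Matrix.vecMulVec (v i) (v i)

def IsGradient {n : ℕ} (f : Matrix (Fin n) (Fin n) ℝ → ℝ)
    (g : Matrix (Fin n) (Fin n) ℝ → Matrix (Fin n) (Fin n) ℝ) : Prop :=
  ∀ X H : Matrix (Fin n) (Fin n) ℝ,
    HasDerivAt (fun t : ℝ => f (X + t • H)) (frobInner (g X) H) 0

def IsMinimizerOn {n : ℕ} (f : Matrix (Fin n) (Fin n) ℝ → ℝ)
    (S : Set (Matrix (Fin n) (Fin n) ℝ)) (Xs : Matrix (Fin n) (Fin n) ℝ) : Prop :=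
  Xs ∈ S ∧ ∀ Y ∈ S, f Xs ≤ f Y


/-- projection onto the spectrahedron. -/
theorem stmt0 (n : ℕ) (hn : 1 ≤ n) (M : Matrix (Fin n) (Fin n) ℝ) (hM : M.IsSymm)
    (lam : Fin n → ℝ) (v : Fin n → Fin n → ℝ)
    (hdecomp : IsEigenDecomp M lam v) :
    (∃! lambda : ℝ, ∑ i, max 0 (lam i - lambda) = 1) ∧
      ∀ lambda : ℝ, (∑ i, max 0 (lam i - lambda) = 1) →
        IsProjOn (spectrahedron n) M
          (∑ i, max 0 (lam i - lambda) • Matrix.vecMulVec (v i) (v i)) := by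
  obtain ⟨hanti, horth, hMdec⟩ := hdecomp
  have hn0 : 0 < n := hn
  -- uniqueness helper
  have key : ∀ a b : ℝ, a < b → (∑ i, max 0 (lam i - a)) = 1 →
      (∑ i, max 0 (lam i - b)) = 1 → False := by
    intro a b hab ha hb
    have hex : ∃ i : Fin n, 0 < max 0 (lam i - a) := by
      by_contra h
      push_neg at h
      have h0 : (∑ i, max 0 (lam i - a)) = 0 :=
        Finset.sum_eq_zero fun i _ => le_antisymm (h i) (le_max_left _ _)
      rw [h0] at ha; norm_num at ha
    obtain ⟨i0, hi0⟩ := hex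
    have hlam : a < lam i0 := by
      by_contra h; push_neg at h
      rw [max_eq_left (by linarith)] at hi0; exact lt_irrefl _ hi0
    have hlt : (∑ i, max 0 (lam i - b)) < ∑ i, max 0 (lam i - a) := by
      refine Finset.sum_lt_sum (fun i _ => max_le_max le_rfl (by linarith))
        ⟨i0, Finset.mem_univ _, ?_⟩
      rw [max_eq_right (by linarith : (0:ℝ) ≤ lam i0 - a)]
      exact max_lt (by linarith) (by linarith)
    rw [ha, hb] at hlt; exact lt_irrefl _ hlt
  have hjn : n - 1 < n := by omega
  have hbotlam : ∀ i : Fin n, lam i ≤ lam ⟨0, hn0⟩ :=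
    fun i => hanti (Fin.le_def.mpr (Nat.zero_le _))
  have htoplam : ∀ i : Fin n, lam ⟨n - 1, hjn⟩ ≤ lam i :=
    fun i => hanti (Fin.le_def.mpr (show i.val ≤ n - 1 by have := i.isLt; omega))
  have huniq : ∃! lambda : ℝ, ∑ i, max 0 (lam i - lambda) = 1 := by
    have hinv : (0:ℝ) < 1 / n := by positivity
    have hab : lam ⟨n - 1, hjn⟩ - 1 / n ≤ lam ⟨0, hn0⟩ := by
      have := htoplam ⟨0, hn0⟩; linarith
    have hfa : (1:ℝ) ≤ ∑ i, max 0 (lam i - (lam ⟨n - 1, hjn⟩ - 1 / n)) := by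
      have hterm : ∀ i : Fin n, (1:ℝ)/n ≤ max 0 (lam i - (lam ⟨n - 1, hjn⟩ - 1 / n)) := by
        intro i
        have h1 := htoplam i
        calc (1:ℝ)/n ≤ lam i - (lam ⟨n - 1, hjn⟩ - 1 / n) := by linarith
          _ ≤ _ := le_max_right _ _
      calc (1:ℝ) = ∑ _i : Fin n, (1:ℝ)/n := by
            rw [Finset.sum_const, Finset.card_univ, Fintype.card_fin, nsmul_eq_mul]
            field_simp
        _ ≤ _ := Finset.sum_le_sum fun i _ => hterm i
    have hfb : (∑ i, max 0 (lam i - lam ⟨0, hn0⟩)) = 0 :=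
      Finset.sum_eq_zero fun i _ => max_eq_left (by have := hbotlam i; linarith)
    have hcont : ContinuousOn (fun t : ℝ => ∑ i, max 0 (lam i - t))
        (Set.Icc (lam ⟨n - 1, hjn⟩ - 1 / n) (lam ⟨0, hn0⟩)) :=
      (continuous_finset_sum _ fun i _ =>
        continuous_const.max (continuous_const.sub continuous_id)).continuousOn
    have hIVT := intermediate_value_Icc' hab hcont
    have h1mem : (1:ℝ) ∈ Set.Icc ((fun t : ℝ => ∑ i, max 0 (lam i - t)) (lam ⟨0, hn0⟩))
        ((fun t : ℝ => ∑ i, max 0 (lam i - t)) (lam ⟨n - 1, hjn⟩ - 1 / n)) := by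
      constructor
      · simp only [hfb]; norm_num
      · exact hfa
    obtain ⟨lambda, -, hl⟩ := hIVT h1mem
    refine ⟨lambda, hl, fun y hy => ?_⟩
    rcases lt_trichotomy y lambda with h | h | h
    · exact (key y lambda h hy hl).elim
    · exact h
    · exact (key lambda y h hl hy).elim
  refine ⟨huniq, ?_⟩
  intro lambda hsum
  set μ : Fin n → ℝ := fun i => max 0 (lam i - lambda) with hμdef
  have hμ0 : ∀ i, 0 ≤ μ i := fun i => le_max_left _ _
  set V : Matrix (Fin n) (Fin n) ℝ := Matrix.of v with hVdef
  have hVVt : V * Vᵀ = 1 := by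
    ext i j
    rw [Matrix.mul_apply]
    simp only [Matrix.transpose_apply, hVdef, Matrix.of_apply]
    rw [horth i j, Matrix.one_apply]
  have hVtV : Vᵀ * V = 1 := mul_eq_one_comm.mp hVVt
  have hrep : ∀ c : Fin n → ℝ, ∑ i, c i • Matrix.vecMulVec (v i) (v i)
      = Vᵀ * Matrix.diagonal c * V := by
    intro c
    ext j k
    rw [Matrix.mul_assoc]
    simp only [Matrix.mul_apply, Matrix.sum_apply, Matrix.smul_apply, Matrix.vecMulVec_apply,
      Matrix.transpose_apply, Matrix.diagonal_apply, hVdef, Matrix.of_apply, smul_eq_mul,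
      ite_mul, zero_mul, Finset.sum_ite_eq, Finset.mem_univ, if_true]
    exact Finset.sum_congr rfl fun i _ => by ring
  set P : Matrix (Fin n) (Fin n) ℝ := ∑ i, μ i • Matrix.vecMulVec (v i) (v i) with hPdef
  have hPrep : P = Vᵀ * Matrix.diagonal μ * V := hrep μ
  have hMrep : M = Vᵀ * Matrix.diagonal lam * V := by rw [hMdec]; exact hrep lam
  have hct : ∀ (A : Matrix (Fin n) (Fin n) ℝ), Aᴴ = Aᵀ := fun A => by
    ext i j; simp [Matrix.conjTranspose_apply]
  have hPpsd : P.PosSemidef := by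
    rw [hPrep, ← hct V]
    exact (Matrix.PosSemidef.diagonal fun i => hμ0 i).conjTranspose_mul_mul_same V
  have htrdiag : ∀ d : Fin n → ℝ, Matrix.trace (Vᵀ * Matrix.diagonal d * V) = ∑ i, d i := by
    intro d
    rw [Matrix.trace_mul_cycle, hVVt, Matrix.one_mul, Matrix.trace_diagonal]
  have hPtr : P.trace = 1 := by rw [hPrep, htrdiag]; exact hsum
  refine ⟨⟨hPpsd, hPtr⟩, ?_⟩
  intro Z hZ
  obtain ⟨hZpsd, hZtr⟩ := hZ
  set z : Fin n → ℝ := fun i => (V * Zᵀ * Vᵀ) i i with hzdef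
  have hznn : ∀ i, 0 ≤ z i := by
    intro i
    have h1 : (V * Zᵀ * Vᵀ) i i = dotProduct (V i) (Z *ᵥ (V i)) := by
      simp only [Matrix.mul_apply, Matrix.transpose_apply, dotProduct, Matrix.mulVec,
        dotProduct, Finset.sum_mul, Finset.mul_sum]
      exact Finset.sum_congr rfl fun j _ => Finset.sum_congr rfl fun k _ => by ring
    have h2 := hZpsd.dotProduct_mulVec_nonneg (V i)
    simp only [hzdef]
    rw [h1]
    simpa using h2
  have hzsum : ∑ i, z i = 1 := by
    have h1 : ∑ i, z i = Matrix.trace (V * Zᵀ * Vᵀ) := by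
      simp [Matrix.trace, Matrix.diag, hzdef]
    rw [h1, Matrix.trace_mul_cycle, hVtV, Matrix.one_mul, Matrix.trace_transpose, hZtr]
  have hdiagtr : ∀ (d : Fin n → ℝ) (W : Matrix (Fin n) (Fin n) ℝ),
      Matrix.trace (Matrix.diagonal d * W) = ∑ i, d i * W i i := by
    intro d W; simp [Matrix.trace, Matrix.diag, Matrix.diagonal_mul]
  have hq : ∀ (d : Fin n → ℝ) (Y : Matrix (Fin n) (Fin n) ℝ),
      Matrix.trace ((Vᵀ * Matrix.diagonal d * V) * Y) = ∑ i, d i * (V * Y * Vᵀ) i i := by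
    intro d Y
    have h1 : (Vᵀ * Matrix.diagonal d * V) * Y = Vᵀ * (Matrix.diagonal d * (V * Y)) := by
      rw [Matrix.mul_assoc, Matrix.mul_assoc]
    rw [h1, Matrix.trace_mul_comm, Matrix.mul_assoc, hdiagtr]
  have hMP : M - P = Vᵀ * Matrix.diagonal (fun i => lam i - μ i) * V := by
    have hd : Matrix.diagonal (fun i => lam i - μ i)
        = Matrix.diagonal lam - Matrix.diagonal μ := by
      rw [← Matrix.diagonal_sub]
    rw [hMrep, hPrep, hd, Matrix.mul_sub, Matrix.sub_mul]
  have hPt : Pᵀ = P := by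
    rw [hPrep, Matrix.transpose_mul, Matrix.transpose_mul, Matrix.transpose_transpose,
      Matrix.diagonal_transpose, Matrix.mul_assoc]
  have hVPV : V * Pᵀ * Vᵀ = Matrix.diagonal μ := by
    rw [hPt, hPrep]
    simp only [← Matrix.mul_assoc]
    rw [hVVt, Matrix.one_mul, Matrix.mul_assoc, hVVt, Matrix.mul_one]
  have hZPdiag : ∀ i, (V * (Z - P)ᵀ * Vᵀ) i i = z i - μ i := by
    intro i
    rw [Matrix.transpose_sub, Matrix.mul_sub, Matrix.sub_mul, Matrix.sub_apply, hVPV]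
    simp [hzdef, Matrix.diagonal_apply_eq]
  have hinner : frobInner (M - P) (Z - P) = ∑ i, (lam i - μ i) * (z i - μ i) := by
    show Matrix.trace ((M - P) * (Z - P)ᵀ) = _
    rw [hMP, hq]
    exact Finset.sum_congr rfl fun i _ => by rw [hZPdiag i]
  have hinnle : frobInner (M - P) (Z - P) ≤ 0 := by
    rw [hinner]
    have hmin : ∀ i, lam i - μ i = min (lam i) lambda := by
      intro i
      rcases le_total (lam i) lambda with h | h
      · rw [min_eq_left h]
        simp only [hμdef]
        rw [max_eq_left (by linarith)]
        ring
      · rw [min_eq_right h]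
        simp only [hμdef]
        rw [max_eq_right (by linarith)]
        ring
    have h1 : ∑ i, (lam i - μ i) * (z i - μ i)
        = ∑ i, min (lam i) lambda * z i - ∑ i, min (lam i) lambda * μ i := by
      rw [← Finset.sum_sub_distrib]
      exact Finset.sum_congr rfl fun i _ => by rw [hmin i]; ring
    have h2 : ∑ i, min (lam i) lambda * z i ≤ ∑ i, lambda * z i :=
      Finset.sum_le_sum fun i _ => mul_le_mul_of_nonneg_right (min_le_right _ _) (hznn i)
    have h3 : ∑ i, min (lam i) lambda * μ i = ∑ i, lambda * μ i := by
      refine Finset.sum_congr rfl fun i _ => ?_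
      rcases le_total (lam i) lambda with h | h
      · have : μ i = 0 := by simp only [hμdef]; exact max_eq_left (by linarith)
        rw [this, mul_zero, mul_zero]
      · rw [min_eq_right h]
    have h4 : ∑ i, lambda * z i = lambda := by rw [← Finset.mul_sum, hzsum, mul_one]
    have h5 : ∑ i, lambda * μ i = lambda := by rw [← Finset.mul_sum, hsum, mul_one]
    rw [h1, h3, h5]
    linarith
  have hIn : ∀ A B : Matrix (Fin n) (Fin n) ℝ,
      frobInner A B = ∑ j, ∑ k, A j k * B j k := by
    intro A B
    show Matrix.trace (A * Bᵀ) = _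
    simp [Matrix.trace, Matrix.diag, Matrix.mul_apply]
  have hfn : ∀ A : Matrix (Fin n) (Fin n) ℝ, frobNorm A = Real.sqrt (frobInner A A) := by
    intro A
    rw [hIn]
    show Real.sqrt _ = _
    congr 1
    exact Finset.sum_congr rfl fun j _ => Finset.sum_congr rfl fun k _ => sq (A j k)
  have hnn : 0 ≤ frobInner (Z - P) (Z - P) := by
    rw [hIn]
    exact Finset.sum_nonneg fun j _ => Finset.sum_nonneg fun k _ => mul_self_nonneg _
  have hexp : frobInner (M - Z) (M - Z)
      = frobInner (M - P) (M - P) - 2 * frobInner (M - P) (Z - P)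
        + frobInner (Z - P) (Z - P) := by
    simp only [hIn, Matrix.sub_apply]
    have hptw : ∀ j k : Fin n, (M j k - Z j k) * (M j k - Z j k)
        = (M j k - P j k) * (M j k - P j k) - 2 * ((M j k - P j k) * (Z j k - P j k))
          + (Z j k - P j k) * (Z j k - P j k) := fun j k => by ring
    simp only [hptw]
    simp [Finset.sum_add_distrib, Finset.sum_sub_distrib, Finset.mul_sum]
  have hle : frobInner (M - P) (M - P) ≤ frobInner (M - Z) (M - Z) := by
    rw [hexp]; linarith
  rw [hfn, hfn]
  exact Real.sqrt_le_sqrt hle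

end LRSGD
end

section
/- Let M be an n×n real symmetric matrix with eigenvalues λ_1 ≥ ... ≥ λ_n, and let 1 ≤ r < n. Then the Euclidean projection Π_{S_n}[M] of M onto the spectrahedron has rank at most r if and only if Σ_{i=1}^r λ_i ≥ 1 + r·λ_{r+1}. -/
open scoped BigOperators
open MeasureTheory
open scoped Matrix

namespace LRSGD

section aux


variable {n : ℕ}

noncomputable def ip (A B : Matrix (Fin n) (Fin n) ℝ) : ℝ := Matrix.trace (A * Bᵀ)

lemma ip_self (A : Matrix (Fin n) (Fin n) ℝ) : ip A A = ∑ a, ∑ b, (A a b)^2 := by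
  simp [ip, Matrix.trace, Matrix.diag, Matrix.mul_apply, sq]

lemma ip_self_nonneg (A : Matrix (Fin n) (Fin n) ℝ) : 0 ≤ ip A A := by
  rw [ip_self]; positivity

lemma frobNorm_eq_sqrt_ip (A : Matrix (Fin n) (Fin n) ℝ) : frobNorm A = Real.sqrt (ip A A) := by
  rw [ip_self]; rfl

lemma frobNorm_le_iff (A B : Matrix (Fin n) (Fin n) ℝ) :
    frobNorm A ≤ frobNorm B ↔ ip A A ≤ ip B B := by
  rw [frobNorm_eq_sqrt_ip, frobNorm_eq_sqrt_ip, Real.sqrt_le_sqrt_iff (ip_self_nonneg B)]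

lemma ip_comm (A B : Matrix (Fin n) (Fin n) ℝ) : ip A B = ip B A := by
  unfold ip
  rw [← Matrix.trace_transpose (A * Bᵀ), Matrix.transpose_mul, Matrix.transpose_transpose]

lemma ip_sub_right (A B C : Matrix (Fin n) (Fin n) ℝ) : ip A (B - C) = ip A B - ip A C := by
  simp [ip, Matrix.transpose_sub, Matrix.mul_sub]

lemma ip_add_right (A B C : Matrix (Fin n) (Fin n) ℝ) : ip A (B + C) = ip A B + ip A C := by
  simp [ip, Matrix.transpose_add, Matrix.mul_add]

lemma ip_sub_left (A B C : Matrix (Fin n) (Fin n) ℝ) : ip (A - B) C = ip A C - ip B C := by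
  simp [ip, Matrix.sub_mul]

lemma ip_add_left (A B C : Matrix (Fin n) (Fin n) ℝ) : ip (A + B) C = ip A C + ip B C := by
  simp [ip, Matrix.add_mul]

lemma ip_smul_left (c : ℝ) (A B : Matrix (Fin n) (Fin n) ℝ) : ip (c • A) B = c * ip A B := by
  simp [ip, Matrix.smul_mul]

lemma ip_smul_right (c : ℝ) (A B : Matrix (Fin n) (Fin n) ℝ) : ip A (c • B) = c * ip A B := by
  rw [ip_comm, ip_smul_left, ip_comm]

lemma eq_zero_of_ip_self_nonpos {A : Matrix (Fin n) (Fin n) ℝ} (h : ip A A ≤ 0) : A = 0 := by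
  have h0 : ∑ a, ∑ b, (A a b)^2 = 0 := le_antisymm (by rw [← ip_self]; exact h) (by positivity)
  ext a b
  have h1 := (Finset.sum_eq_zero_iff_of_nonneg
    (fun a _ => Finset.sum_nonneg fun b _ => sq_nonneg _)).mp h0 a (Finset.mem_univ a)
  have h2 := (Finset.sum_eq_zero_iff_of_nonneg (fun b _ => sq_nonneg _)).mp h1 b (Finset.mem_univ b)
  simpa using h2

lemma transpose_eq_of_hermitian {Z : Matrix (Fin n) (Fin n) ℝ} (h : Z.IsHermitian) : Zᵀ = Z := by
  ext a b
  have := congrFun (congrFun h a) b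
  simpa [Matrix.conjTranspose_apply] using this

lemma conjTranspose_eq_transpose_real (A : Matrix (Fin n) (Fin n) ℝ) : Aᴴ = Aᵀ := by
  ext a b; simp [Matrix.conjTranspose_apply]

lemma diag_nonneg_of_posSemidef {Z : Matrix (Fin n) (Fin n) ℝ} (h : Z.PosSemidef) (i : Fin n) :
    0 ≤ Z i i := by
  have h2 := h.dotProduct_mulVec_nonneg (Pi.single i 1)
  simpa [dotProduct, Matrix.mulVec, Pi.single_apply, Finset.sum_ite_eq',
    mul_ite, ite_mul, Finset.sum_ite_eq] using h2

lemma posSemidef_smul_half {P Q : Matrix (Fin n) (Fin n) ℝ} (hP : P.PosSemidef)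
    (hQ : Q.PosSemidef) : ((1/2 : ℝ) • (P + Q)).PosSemidef := by
  refine Matrix.PosSemidef.of_dotProduct_mulVec_nonneg ?_ ?_
  · have h1 := transpose_eq_of_hermitian hP.1
    have h2 := transpose_eq_of_hermitian hQ.1
    show _ᴴ = _
    rw [conjTranspose_eq_transpose_real]
    rw [Matrix.transpose_smul, Matrix.transpose_add, h1, h2]
  · intro x
    have h1 := hP.dotProduct_mulVec_nonneg x
    have h2 := hQ.dotProduct_mulVec_nonneg x
    rw [Matrix.smul_mulVec, Matrix.add_mulVec, dotProduct_smul,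
      dotProduct_add]
    have : (0:ℝ) ≤ dotProduct (star x) (P.mulVec x) + dotProduct (star x) (Q.mulVec x) :=
      add_nonneg h1 h2
    simp only [smul_eq_mul]
    linarith

end aux

section main

open Matrix

variable {n : ℕ} {v : Fin n → Fin n → ℝ}

def ortho (v : Fin n → Fin n → ℝ) : Prop :=
  ∀ i j, (∑ k, v i k * v j k) = if i = j then (1 : ℝ) else 0

lemma ortho_VVt (hv : ortho v) : Matrix.of v * (Matrix.of v)ᵀ = 1 := by
  ext i j
  simpa [Matrix.mul_apply, Matrix.one_apply] using hv i j

lemma ortho_VtV (hv : ortho v) : (Matrix.of v)ᵀ * Matrix.of v = 1 :=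
  mul_eq_one_comm.mp (ortho_VVt hv)

/-- `Smat` entry formula : VᵀDV = Σ cᵢ vᵢvᵢᵀ -/
lemma smat_eq (c : Fin n → ℝ) :
    (Matrix.of v)ᵀ * Matrix.diagonal c * Matrix.of v
      = ∑ i, c i • Matrix.vecMulVec (v i) (v i) := by
  ext a b
  rw [Matrix.mul_assoc, Matrix.mul_apply]
  simp only [Matrix.sum_apply, Matrix.smul_apply, Matrix.vecMulVec_apply, smul_eq_mul,
    Matrix.transpose_apply, Matrix.diagonal_mul, Matrix.of_apply]
  exact Finset.sum_congr rfl fun i _ => by ring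

lemma smat_trace (hv : ortho v) (c : Fin n → ℝ) :
    ((Matrix.of v)ᵀ * Matrix.diagonal c * Matrix.of v).trace = ∑ i, c i := by
  rw [Matrix.trace_mul_cycle, ortho_VVt hv, Matrix.one_mul, Matrix.trace_diagonal]

lemma trace_diagonal_mul (c : Fin n → ℝ) (B : Matrix (Fin n) (Fin n) ℝ) :
    (Matrix.diagonal c * B).trace = ∑ i, c i * B i i := by
  simp [Matrix.trace, Matrix.diag, Matrix.diagonal_mul]

lemma ip_smat (c : Fin n → ℝ) (Z : Matrix (Fin n) (Fin n) ℝ) (hZ : Zᵀ = Z) :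
    LRSGD.ip ((Matrix.of v)ᵀ * Matrix.diagonal c * Matrix.of v) Z
      = ∑ i, c i * (Matrix.of v * Z * (Matrix.of v)ᵀ) i i := by
  set V := Matrix.of v
  have : LRSGD.ip (Vᵀ * Matrix.diagonal c * V) Z
      = (Matrix.diagonal c * (V * Z * Vᵀ)).trace := by
    rw [LRSGD.ip, hZ, Matrix.mul_assoc (Vᵀ * Matrix.diagonal c) V Z,
      Matrix.trace_mul_comm, ← Matrix.mul_assoc, Matrix.trace_mul_comm]
  rw [this, trace_diagonal_mul]

lemma ip_smat_smat (hv : ortho v) (c d : Fin n → ℝ) :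
    LRSGD.ip ((Matrix.of v)ᵀ * Matrix.diagonal c * Matrix.of v)
      ((Matrix.of v)ᵀ * Matrix.diagonal d * Matrix.of v) = ∑ i, c i * d i := by
  set V := Matrix.of v
  have hsym : (Vᵀ * Matrix.diagonal d * V)ᵀ = Vᵀ * Matrix.diagonal d * V := by
    simp [Matrix.transpose_mul, Matrix.transpose_transpose, Matrix.diagonal_transpose,
      Matrix.mul_assoc]
  rw [ip_smat c _ hsym]
  have hmid : V * (Vᵀ * Matrix.diagonal d * V) * Vᵀ = Matrix.diagonal d := by
    calc V * (Vᵀ * Matrix.diagonal d * V) * Vᵀ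
        = (V * Vᵀ) * Matrix.diagonal d * (V * Vᵀ) := by
          simp only [Matrix.mul_assoc]
      _ = Matrix.diagonal d := by rw [ortho_VVt hv]; simp
  rw [hmid]
  simp [Matrix.diagonal_apply_eq]

lemma sum_diag_conj (hv : ortho v) (Z : Matrix (Fin n) (Fin n) ℝ) :
    ∑ i, (Matrix.of v * Z * (Matrix.of v)ᵀ) i i = Z.trace := by
  have : ∑ i, (Matrix.of v * Z * (Matrix.of v)ᵀ) i i
      = (Matrix.of v * Z * (Matrix.of v)ᵀ).trace := rfl
  rw [this, Matrix.trace_mul_cycle, ortho_VtV hv, Matrix.one_mul]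

lemma conj_diag_nonneg {Z : Matrix (Fin n) (Fin n) ℝ} (hZ : Z.PosSemidef) (i : Fin n) :
    0 ≤ (Matrix.of v * Z * (Matrix.of v)ᵀ) i i := by
  have h := hZ.mul_mul_conjTranspose_same (Matrix.of v)
  rw [LRSGD.conjTranspose_eq_transpose_real] at h
  exact LRSGD.diag_nonneg_of_posSemidef h i

lemma smat_posSemidef (c : Fin n → ℝ) (hc : ∀ i, 0 ≤ c i) :
    ((Matrix.of v)ᵀ * Matrix.diagonal c * Matrix.of v).PosSemidef := by
  have hd : (Matrix.diagonal c).PosSemidef := Matrix.posSemidef_diagonal_iff.mpr hc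
  have h := hd.mul_mul_conjTranspose_same (Matrix.of v)ᵀ
  rwa [LRSGD.conjTranspose_eq_transpose_real, Matrix.transpose_transpose] at h

lemma smat_mulVec (hv : ortho v) (c : Fin n → ℝ) (i : Fin n) :
    ((Matrix.of v)ᵀ * Matrix.diagonal c * Matrix.of v).mulVec (v i) = c i • v i := by
  set V := Matrix.of v
  have h1 : V.mulVec (v i) = Pi.single i 1 := by
    ext j
    have := hv j i
    simp only [Matrix.mulVec, dotProduct] at *
    rw [show (∑ k, V j k * v i k) = ∑ k, v j k * v i k from rfl, this, Pi.single_apply]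
  have h2 : (Matrix.diagonal c).mulVec (Pi.single i 1) = Pi.single i (c i) := by
    ext j
    rw [Matrix.mulVec_diagonal, Pi.single_apply, Pi.single_apply]
    by_cases h : j = i <;> simp [h]
  have h3 : Vᵀ.mulVec (Pi.single i (c i)) = c i • v i := by
    ext a
    simp only [Matrix.mulVec, dotProduct, Matrix.transpose_apply, Pi.single_apply,
      mul_ite, mul_zero, Finset.sum_ite_eq', Finset.mem_univ, if_true, Pi.smul_apply,
      smul_eq_mul]
    exact mul_comm _ _
  calc (Vᵀ * Matrix.diagonal c * V).mulVec (v i)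
      = Vᵀ.mulVec ((Matrix.diagonal c).mulVec (V.mulVec (v i))) := by
        rw [Matrix.mulVec_mulVec, Matrix.mulVec_mulVec]
    _ = c i • v i := by rw [h1, h2, h3]

lemma transpose_mulVec_eq_sum (w : Fin n → ℝ) :
    (Matrix.of v)ᵀ.mulVec w = ∑ j, w j • v j := by
  ext a
  simp only [Matrix.mulVec, dotProduct, Matrix.transpose_apply, Matrix.of_apply,
    Finset.sum_apply, Pi.smul_apply, smul_eq_mul]
  exact Finset.sum_congr rfl fun j _ => mul_comm _ _

lemma ortho_linearIndependent (hv : ortho v) : LinearIndependent ℝ v := by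
  rw [linearIndependent_iff']
  intro s g hsum i hi
  have hk : ∀ k, ∑ j ∈ s, g j * v j k = 0 := by
    intro k
    have := congrFun hsum k
    simpa [Finset.sum_apply] using this
  have key : ∑ j ∈ s, g j * (∑ k, v j k * v i k) = 0 := by
    calc ∑ j ∈ s, g j * (∑ k, v j k * v i k)
        = ∑ j ∈ s, ∑ k, g j * v j k * v i k := by
          refine Finset.sum_congr rfl fun j _ => ?_
          rw [Finset.mul_sum]
          exact Finset.sum_congr rfl fun k _ => by ring
      _ = ∑ k, ∑ j ∈ s, g j * v j k * v i k := Finset.sum_comm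
      _ = ∑ k, (∑ j ∈ s, g j * v j k) * v i k := by
          refine Finset.sum_congr rfl fun k _ => ?_
          rw [Finset.sum_mul]
      _ = 0 := by simp [hk]
  have key2 : ∑ j ∈ s, g j * (if j = i then (1:ℝ) else 0) = 0 := by
    rw [show (∑ j ∈ s, g j * (if j = i then (1:ℝ) else 0))
        = ∑ j ∈ s, g j * (∑ k, v j k * v i k) from
      Finset.sum_congr rfl fun j _ => by rw [hv j i]]
    exact key
  simpa [mul_ite, Finset.sum_ite_eq', hi] using key2

lemma rank_smat_le (μ : Fin n → ℝ) {r : ℕ} (hrn : r ≤ n)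
    (hμ0 : ∀ i : Fin n, r ≤ i.val → μ i = 0) :
    ((Matrix.of v)ᵀ * Matrix.diagonal μ * Matrix.of v).rank ≤ r := by
  set Q := (Matrix.of v)ᵀ * Matrix.diagonal μ * Matrix.of v with hQ
  have hrange : LinearMap.range Q.mulVecLin
      ≤ Submodule.span ℝ (Set.range fun i : Fin r => v (Fin.castLE hrn i)) := by
    rintro x ⟨y, rfl⟩
    rw [Matrix.mulVecLin_apply]
    have hQy : Q.mulVec y
        = ∑ j, ((Matrix.diagonal μ).mulVec ((Matrix.of v).mulVec y)) j • v j := by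
      rw [show Q.mulVec y
          = (Matrix.of v)ᵀ.mulVec ((Matrix.diagonal μ).mulVec ((Matrix.of v).mulVec y)) by
        rw [Matrix.mulVec_mulVec, Matrix.mulVec_mulVec, hQ]]
      rw [transpose_mulVec_eq_sum]
    rw [hQy]
    refine Submodule.sum_mem _ fun j _ => ?_
    by_cases hj : j.val < r
    · exact Submodule.smul_mem _ _ (Submodule.subset_span ⟨⟨j.val, hj⟩, by congr 1⟩)
    · rw [Matrix.mulVec_diagonal, hμ0 j (le_of_not_gt hj), zero_mul, zero_smul]
      exact Submodule.zero_mem _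
  have h1 : Q.rank ≤ Module.finrank ℝ
      (Submodule.span ℝ (Set.range fun i : Fin r => v (Fin.castLE hrn i))) := by
    exact Submodule.finrank_mono hrange
  refine h1.trans ?_
  classical
  refine (finrank_span_le_card (R := ℝ) (Set.range fun i : Fin r => v (Fin.castLE hrn i))).trans ?_
  rw [Set.toFinset_range]
  exact (Finset.card_image_le).trans (by simp)

lemma rank_smat_ge (hv : ortho v) (μ : Fin n → ℝ) {r : ℕ} (hrn : r < n)
    (hμpos : ∀ i : Fin n, i.val ≤ r → μ i ≠ 0) :
    r + 1 ≤ ((Matrix.of v)ᵀ * Matrix.diagonal μ * Matrix.of v).rank := by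
  set Q := (Matrix.of v)ᵀ * Matrix.diagonal μ * Matrix.of v with hQ
  have hli : LinearIndependent ℝ (fun i : Fin (r+1) => v (Fin.castLE hrn i)) :=
    (ortho_linearIndependent hv).comp _ (Fin.castLE_injective hrn)
  have hspan : Submodule.span ℝ (Set.range fun i : Fin (r+1) => v (Fin.castLE hrn i))
      ≤ LinearMap.range Q.mulVecLin := by
    rw [Submodule.span_le]
    rintro x ⟨i, rfl⟩
    have hne := hμpos (Fin.castLE hrn i) (Nat.lt_succ_iff.mp i.isLt)
    refine ⟨(μ (Fin.castLE hrn i))⁻¹ • v (Fin.castLE hrn i), ?_⟩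
    rw [Matrix.mulVecLin_apply, Matrix.mulVec_smul, hQ, smat_mulVec hv, smul_smul,
      inv_mul_cancel₀ hne, one_smul]
  calc r + 1 = Module.finrank ℝ
        (Submodule.span ℝ (Set.range fun i : Fin (r+1) => v (Fin.castLE hrn i))) := by
        rw [finrank_span_eq_card hli, Fintype.card_fin]
    _ ≤ Module.finrank ℝ (LinearMap.range Q.mulVecLin) := Submodule.finrank_mono hspan
    _ = Q.rank := rfl

end main

/-- rank of the projection onto the spectrahedron is at most r iff
`Σ_{i=1}^r λ_i ≥ 1 + r·λ_{r+1}`. -/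
theorem stmt1 (n r : ℕ) (hr : 1 ≤ r) (hrn : r < n)
    (M : Matrix (Fin n) (Fin n) ℝ) (hM : M.IsSymm)
    (lam : Fin n → ℝ) (v : Fin n → Fin n → ℝ)
    (hdecomp : IsEigenDecomp M lam v)
    (P : Matrix (Fin n) (Fin n) ℝ)
    (hP : IsProjOn (spectrahedron n) M P) :
    P.rank ≤ r ↔
      1 + (r : ℝ) * lam ⟨r, hrn⟩ ≤ ∑ i : Fin r, lam (Fin.castLE hrn.le i) := by
  obtain ⟨hlam_anti, hv, hMdec⟩ := hdecomp
  have hv' : ortho v := hv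
  have hn : 0 < n := lt_of_le_of_lt (Nat.zero_le r) hrn
  set i0 : Fin n := ⟨0, hn⟩ with hi0
  -- existence of the water-filling level θ
  set g : ℝ → ℝ := fun θ => ∑ i, max (lam i - θ) 0 with hgdef
  have hcont : Continuous g := by
    apply continuous_finset_sum
    intro i _
    exact (continuous_const.sub continuous_id).max continuous_const
  have hga : 1 ≤ g (lam i0 - 1) := by
    have h2 : max (lam i0 - (lam i0 - 1)) 0 ≤ ∑ i, max (lam i - (lam i0 - 1)) 0 :=
      Finset.single_le_sum (f := fun i => max (lam i - (lam i0 - 1)) 0)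
        (fun i _ => le_max_right _ _) (Finset.mem_univ i0)
    have h1 : max (lam i0 - (lam i0 - 1)) 0 = 1 := by norm_num
    calc (1:ℝ) = max (lam i0 - (lam i0 - 1)) 0 := h1.symm
      _ ≤ ∑ i, max (lam i - (lam i0 - 1)) 0 := h2
      _ = g (lam i0 - 1) := rfl
  have hgb : g (lam i0) = 0 := Finset.sum_eq_zero fun i _ =>
    max_eq_right (sub_nonpos.mpr (hlam_anti (Fin.le_def.mpr (Nat.zero_le _))))
  obtain ⟨θ, -, hθ⟩ := intermediate_value_Icc' (show lam i0 - 1 ≤ lam i0 by linarith)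
    hcont.continuousOn (Set.mem_Icc.mpr ⟨by rw [hgb]; norm_num, hga⟩)
  set μ : Fin n → ℝ := fun i => max (lam i - θ) 0 with hμdef
  have hμ_nonneg : ∀ i, 0 ≤ μ i := fun i => le_max_right _ _
  have hμ_anti : ∀ i j : Fin n, i ≤ j → μ j ≤ μ i := fun i j hij =>
    max_le_max (sub_le_sub_right (hlam_anti hij) θ) le_rfl
  have hμ_sum : ∑ i, μ i = 1 := hθ
  have hQpsd : ((Matrix.of v)ᵀ * Matrix.diagonal μ * Matrix.of v).PosSemidef :=
    smat_posSemidef μ hμ_nonneg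
  have hQtr : ((Matrix.of v)ᵀ * Matrix.diagonal μ * Matrix.of v).trace = 1 := by
    rw [smat_trace hv', hμ_sum]
  have hQS : ((Matrix.of v)ᵀ * Matrix.diagonal μ * Matrix.of v) ∈ spectrahedron n :=
    ⟨hQpsd, hQtr⟩
  set Q := (Matrix.of v)ᵀ * Matrix.diagonal μ * Matrix.of v with hQdef
  set c : Fin n → ℝ := fun i => lam i - μ i with hcdef
  have hMQ : M - Q = (Matrix.of v)ᵀ * Matrix.diagonal c * Matrix.of v := by
    have hM' : M = (Matrix.of v)ᵀ * Matrix.diagonal lam * Matrix.of v := by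
      rw [smat_eq]; exact hMdec
    rw [hM', hQdef, ← Matrix.sub_mul, ← Matrix.mul_sub, Matrix.diagonal_sub]
  have hcθ : ∀ i, c i ≤ θ := by
    intro i
    show lam i - μ i ≤ θ
    rcases le_total (lam i) θ with h | h
    · have h0 : μ i = 0 := max_eq_right (by linarith)
      rw [h0]; linarith
    · have h0 : μ i = lam i - θ := max_eq_left (by linarith)
      rw [h0]; linarith
  have hcμ : ∀ i, c i * μ i = θ * μ i := by
    intro i
    rcases le_total (lam i) θ with h | h
    · have h0 : μ i = 0 := max_eq_right (by linarith)
      show (lam i - μ i) * μ i = θ * μ i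
      rw [h0]; ring
    · have h0 : μ i = lam i - θ := max_eq_left (by linarith)
      show (lam i - μ i) * μ i = θ * μ i
      rw [h0]; ring
  -- Q is the projection
  have hopt : ∀ Z ∈ spectrahedron n, ip (M - Q) (Z - Q) ≤ 0 := by
    intro Z hZ
    have hZt : Zᵀ = Z := transpose_eq_of_hermitian hZ.1.1
    rw [ip_sub_right, hMQ]
    have h1 := ip_smat (v := v) c Z hZt
    have h2 : ip ((Matrix.of v)ᵀ * Matrix.diagonal c * Matrix.of v) Q = ∑ i, c i * μ i := by
      rw [hQdef]; exact ip_smat_smat hv' c μ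
    rw [h1, h2]
    have h3 : ∑ i, c i * (Matrix.of v * Z * (Matrix.of v)ᵀ) i i
        ≤ ∑ i, θ * (Matrix.of v * Z * (Matrix.of v)ᵀ) i i :=
      Finset.sum_le_sum fun i _ =>
        mul_le_mul_of_nonneg_right (hcθ i) (conj_diag_nonneg hZ.1 i)
    have h4 : ∑ i, θ * (Matrix.of v * Z * (Matrix.of v)ᵀ) i i = θ := by
      rw [← Finset.mul_sum, sum_diag_conj hv', hZ.2, mul_one]
    have h5 : ∑ i, c i * μ i = θ := by
      rw [show (∑ i, c i * μ i) = ∑ i, θ * μ i from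
        Finset.sum_congr rfl fun i _ => hcμ i, ← Finset.mul_sum, hμ_sum, mul_one]
    linarith
  have hQmin : ∀ Z ∈ spectrahedron n, ip (M - Q) (M - Q) ≤ ip (M - Z) (M - Z) := by
    intro Z hZ
    have hdec : M - Z = (M - Q) + (Q - Z) := by abel
    rw [hdec, ip_add_right, ip_add_left, ip_add_left]
    have hcomm := ip_comm (Q - Z) (M - Q)
    have h1 : ip (M - Q) (Q - Z) = - ip (M - Q) (Z - Q) := by
      rw [ip_sub_right, ip_sub_right]; ring
    have h2 := hopt Z hZ
    have h3 := ip_self_nonneg (Q - Z)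
    linarith
  obtain ⟨hPS, hPmin⟩ := hP
  -- uniqueness of the projection : P = Q
  have hPQ : P = Q := by
    have hd1 : ip (M - P) (M - P) ≤ ip (M - Q) (M - Q) :=
      (frobNorm_le_iff _ _).mp (hPmin Q hQS)
    have hd2 : ip (M - Q) (M - Q) ≤ ip (M - P) (M - P) := hQmin P hPS
    have hRS : ((1/2 : ℝ) • (P + Q)) ∈ spectrahedron n := by
      refine ⟨posSemidef_smul_half hPS.1 hQpsd, ?_⟩
      rw [Matrix.trace_smul, Matrix.trace_add, hPS.2, hQtr]
      norm_num
    have hmin := (frobNorm_le_iff _ _).mp (hPmin _ hRS)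
    have hMR : M - (1/2 : ℝ) • (P + Q) = (1/2 : ℝ) • ((M - P) + (M - Q)) := by
      module
    have hexp : ip (M - (1/2:ℝ) • (P+Q)) (M - (1/2:ℝ) • (P+Q))
        = (1/2) * ((1/2) * (ip (M-P) (M-P) + ip (M-P) (M-Q)
            + (ip (M-Q) (M-P) + ip (M-Q) (M-Q)))) := by
      rw [hMR, ip_smul_left, ip_smul_right, ip_add_left, ip_add_right, ip_add_right]
    have hAB : (M - P) - (M - Q) = Q - P := by abel
    have hexpand2 : ip (Q - P) (Q - P)
        = ip (M-P) (M-P) - ip (M-Q) (M-P) - ip (M-P) (M-Q) + ip (M-Q) (M-Q) := by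
      rw [← hAB, ip_sub_right (M-P-(M-Q)) (M-P) (M-Q),
        ip_sub_left (M-P) (M-Q) (M-P), ip_sub_left (M-P) (M-Q) (M-Q)]
      ring
    have hcomm2 := ip_comm (M - Q) (M - P)
    have hz : ip (Q - P) (Q - P) ≤ 0 := by linarith
    have h0 : Q - P = 0 := eq_zero_of_ip_self_nonpos hz
    exact (sub_eq_zero.mp h0).symm
  -- rank characterization
  have hrank_iff : Q.rank ≤ r ↔ μ ⟨r, hrn⟩ = 0 := by
    constructor
    · intro hle
      by_contra hne
      have hμpos : ∀ i : Fin n, i.val ≤ r → μ i ≠ 0 := by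
        intro i hi h0
        have h1 : μ ⟨r, hrn⟩ ≤ μ i := hμ_anti _ _ (Fin.le_def.mpr (by simpa using hi))
        exact hne (le_antisymm (h0 ▸ h1) (hμ_nonneg _))
      have := rank_smat_ge hv' μ hrn hμpos
      rw [← hQdef] at this
      omega
    · intro h0
      have hμ0 : ∀ i : Fin n, r ≤ i.val → μ i = 0 := by
        intro i hi
        have h1 : μ i ≤ μ ⟨r, hrn⟩ := hμ_anti _ _ (Fin.le_def.mpr (by simpa using hi))
        rw [h0] at h1
        exact le_antisymm h1 (hμ_nonneg i)
      have := rank_smat_le (v := v) μ hrn.le hμ0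
      rw [← hQdef] at this
      exact this
  rw [hPQ, hrank_iff]
  -- index bookkeeping
  classical
  set s : Finset (Fin n) := Finset.univ.filter (fun j => j.val < r) with hsdef
  have hmap : Finset.univ.map (Fin.castLEEmb hrn.le) = s := by
    ext j
    simp only [Finset.mem_map, Finset.mem_univ, true_and, hsdef, Finset.mem_filter]
    constructor
    · rintro ⟨i, rfl⟩
      simpa using i.isLt
    · intro hj
      exact ⟨⟨j.val, hj⟩, Fin.ext rfl⟩
  have hcard : s.card = r := by
    rw [← hmap, Finset.card_map, Finset.card_univ, Fintype.card_fin]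
  have hT : ∑ i : Fin r, lam (Fin.castLE hrn.le i) = ∑ j ∈ s, lam j := by
    rw [← hmap, Finset.sum_map]
    rfl
  have hrmem : (⟨r, hrn⟩ : Fin n) ∉ s := by simp [hsdef]
  have hmem_le : ∀ j ∈ s, lam ⟨r, hrn⟩ ≤ lam j := by
    intro j hj
    have hjr : j.val < r := by simpa [hsdef] using hj
    exact hlam_anti (Fin.le_def.mpr (le_of_lt hjr))
  rw [hT]
  constructor
  · -- μ_r = 0 → inequality
    intro h0
    have hθr : lam ⟨r, hrn⟩ ≤ θ := by
      by_contra hlt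
      push_neg at hlt
      have h1 : μ ⟨r, hrn⟩ = lam ⟨r, hrn⟩ - θ := max_eq_left (by linarith)
      rw [h0] at h1
      linarith
    have hμ0 : ∀ i : Fin n, r ≤ i.val → μ i = 0 := by
      intro i hi
      have h1 : μ i ≤ μ ⟨r, hrn⟩ := hμ_anti _ _ (Fin.le_def.mpr (by simpa using hi))
      rw [h0] at h1
      exact le_antisymm h1 (hμ_nonneg i)
    have hsum1 : ∑ j ∈ s, μ j = 1 := by
      rw [← hμ_sum]
      exact Finset.sum_subset (Finset.subset_univ s)
        (fun i _ hi => hμ0 i (le_of_not_gt (by simpa [hsdef] using hi)))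
    have hterm : ∀ j ∈ s, μ j ≤ lam j - lam ⟨r, hrn⟩ := by
      intro j hj
      have h2 := hmem_le j hj
      exact max_le (by linarith) (by linarith)
    have hsum2 : ∑ j ∈ s, (lam j - lam ⟨r, hrn⟩) = (∑ j ∈ s, lam j) - r * lam ⟨r, hrn⟩ := by
      rw [Finset.sum_sub_distrib, Finset.sum_const, hcard, nsmul_eq_mul]
    have h6 := Finset.sum_le_sum hterm
    linarith
  · -- inequality → μ_r = 0
    intro hineq
    by_contra hne
    have hθlt : θ < lam ⟨r, hrn⟩ := by
      by_contra hge
      push_neg at hge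
      exact hne (max_eq_right (by linarith))
    have hterm : ∀ j ∈ s, μ j = lam j - θ := by
      intro j hj
      have h2 := hmem_le j hj
      exact max_eq_left (by linarith)
    have hbig : μ ⟨r, hrn⟩ + ∑ j ∈ s, μ j ≤ 1 := by
      rw [← hμ_sum, ← Finset.sum_insert hrmem]
      exact Finset.sum_le_sum_of_subset_of_nonneg (Finset.subset_univ _)
        (fun i _ _ => hμ_nonneg i)
    have hsμ : ∑ j ∈ s, μ j = (∑ j ∈ s, lam j) - r * θ := by
      rw [Finset.sum_congr rfl hterm, Finset.sum_sub_distrib, Finset.sum_const, hcard,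
        nsmul_eq_mul]
    have hμr : μ ⟨r, hrn⟩ = lam ⟨r, hrn⟩ - θ := max_eq_left (by linarith)
    have hrθ : (r : ℝ) * θ ≤ r * lam ⟨r, hrn⟩ :=
      mul_le_mul_of_nonneg_left hθlt.le (Nat.cast_nonneg r)
    rw [hμr] at hbig
    linarith

end LRSGD
end

section
/- Let M be an n×n real symmetric matrix with eigendecomposition M = Σ_{i=1}^n λ_i v_i v_iᵀ (λ_1 ≥ ... ≥ λ_n, orthonormal v_i). If rank(Π_{S_n}[M]) = r, then Π_{S_n}[M] = Σ_{i=1}^r (λ_i − λ) v_i v_iᵀ, where λ is the unique scalar with Σ_{i=1}^r (λ_i − λ) = 1; in particular, the projection is determined by only the top r eigenvalues and corresponding eigenvectors of M. -/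
open scoped BigOperators
open MeasureTheory
open scoped Matrix

namespace LRSGD

private lemma psd_smul {n : ℕ} {A : Matrix (Fin n) (Fin n) ℝ} {c : ℝ}
    (hA : A.PosSemidef) (hc : 0 ≤ c) : (c • A).PosSemidef := by
  refine Matrix.PosSemidef.of_dotProduct_mulVec_nonneg ?_ ?_
  · show (c • A)ᴴ = c • A
    rw [Matrix.conjTranspose_smul, hA.1.eq]; simp
  · intro x
    have h := hA.dotProduct_mulVec_nonneg x
    rw [Matrix.smul_mulVec, dotProduct_smul]
    simpa using mul_nonneg hc (by simpa using h)

private lemma sq_sum_expand {n : ℕ} (A B : Matrix (Fin n) (Fin n) ℝ) (t : ℝ) :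
    ∑ i, ∑ j, ((A - t • B) i j)^2
      = (∑ i, ∑ j, (A i j)^2) - 2*t*(∑ i, ∑ j, A i j * B i j)
        + t^2 * (∑ i, ∑ j, (B i j)^2) := by
  have h : ∀ i j : Fin n, ((A - t • B) i j)^2
      = (A i j)^2 - 2*t*(A i j * B i j) + t^2*(B i j)^2 := by
    intro i j
    simp only [Matrix.sub_apply, Matrix.smul_apply, smul_eq_mul]
    ring
  simp_rw [h, Finset.sum_add_distrib, Finset.sum_sub_distrib, ← Finset.mul_sum]

private lemma sum_swap3 {n : ℕ} (f : Fin n → Fin n → Fin n → ℝ) :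
    (∑ a, ∑ b, ∑ i, f i a b) = ∑ i, ∑ a, ∑ b, f i a b :=
  calc (∑ a, ∑ b, ∑ i, f i a b) = ∑ a, ∑ i, ∑ b, f i a b :=
        Finset.sum_congr rfl fun _ _ => Finset.sum_comm
    _ = ∑ i, ∑ a, ∑ b, f i a b := Finset.sum_comm

private lemma ip_sum_smul {n : ℕ} (c : Fin n → ℝ) (R : Fin n → Matrix (Fin n) (Fin n) ℝ)
    (X : Matrix (Fin n) (Fin n) ℝ) :
    (∑ a, ∑ b, ((∑ i, c i • R i) a b) * X a b)
      = ∑ i, c i * (∑ a, ∑ b, R i a b * X a b) := by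
  have h : (∑ a, ∑ b, ((∑ i, c i • R i) a b) * X a b)
      = ∑ a, ∑ b, ∑ i, c i * R i a b * X a b := by
    simp_rw [Matrix.sum_apply, Matrix.smul_apply, smul_eq_mul, Finset.sum_mul]
  rw [h, sum_swap3 fun i a b => c i * R i a b * X a b]
  refine Finset.sum_congr rfl fun i _ => ?_
  rw [Finset.mul_sum]
  refine Finset.sum_congr rfl fun a _ => ?_
  rw [Finset.mul_sum]
  exact Finset.sum_congr rfl fun b _ => by ring

private lemma var_ineq {n : ℕ} (M P : Matrix (Fin n) (Fin n) ℝ)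
    (hPS : P ∈ spectrahedron n)
    (hPmin : ∀ Z ∈ spectrahedron n, frobNorm (M - P) ≤ frobNorm (M - Z)) :
    ∀ Z ∈ spectrahedron n, (∑ i, ∑ j, (M - P) i j * (Z - P) i j) ≤ 0 := by
  intro Z hZ
  set IP : ℝ := ∑ i, ∑ j, (M - P) i j * (Z - P) i j with hIP
  set C : ℝ := ∑ i, ∑ j, ((Z - P) i j)^2 with hC
  have hC0 : 0 ≤ C := Finset.sum_nonneg fun i _ => Finset.sum_nonneg fun j _ => sq_nonneg _
  have key : ∀ t : ℝ, 0 < t → t ≤ 1 → 2 * t * IP ≤ t^2 * C := by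
    intro t ht ht1
    have hmem : P + t • (Z - P) ∈ spectrahedron n := by
      have heq : P + t • (Z - P) = (1 - t) • P + t • Z := by
        ext a b
        simp only [Matrix.add_apply, Matrix.smul_apply, Matrix.sub_apply, smul_eq_mul]
        ring
      constructor
      · rw [heq]
        exact (psd_smul hPS.1 (by linarith : (0:ℝ) ≤ 1 - t)).add (psd_smul hZ.1 ht.le)
      · rw [heq]
        simp [Matrix.trace_add, Matrix.trace_smul, hZ.2, hPS.2, smul_eq_mul]
    have hle := hPmin _ hmem
    have heq2 : M - (P + t • (Z - P)) = (M - P) - t • (Z - P) := by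
      ext a b
      simp only [Matrix.sub_apply, Matrix.add_apply, Matrix.smul_apply, smul_eq_mul]
      ring
    rw [heq2] at hle
    unfold frobNorm at hle
    have h2 : (∑ i, ∑ j, ((M - P) i j)^2) ≤ ∑ i, ∑ j, (((M - P) - t • (Z - P)) i j)^2 :=
      (Real.sqrt_le_sqrt_iff
        (Finset.sum_nonneg fun i _ => Finset.sum_nonneg fun j _ => sq_nonneg _)).mp hle
    rw [sq_sum_expand] at h2
    linarith
  by_contra hpos
  push_neg at hpos
  rcases eq_or_lt_of_le hC0 with hCeq | hCpos
  · have := key 1 one_pos le_rfl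
    rw [← hCeq] at this
    nlinarith
  · set t : ℝ := min 1 (IP / C) with htdef
    have ht : 0 < t := lt_min one_pos (div_pos hpos hCpos)
    have h1 := key t ht (min_le_left _ _)
    have h2 : t * C ≤ IP := by
      have := mul_le_mul_of_nonneg_right (min_le_right 1 (IP / C)) hC0
      rwa [div_mul_cancel₀ _ (ne_of_gt hCpos)] at this
    nlinarith

private lemma var_ineq_Q {n : ℕ} (M : Matrix (Fin n) (Fin n) ℝ)
    (lam : Fin n → ℝ) (v : Fin n → Fin n → ℝ)
    (horth : ∀ i j, (∑ k, v i k * v j k) = if i = j then (1 : ℝ) else 0)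
    (horth2 : ∀ a b, (∑ i, v i a * v i b) = if a = b then (1:ℝ) else 0)
    (hMeq : M = ∑ i, lam i • Matrix.vecMulVec (v i) (v i))
    (θ : ℝ) (μ : Fin n → ℝ) (hμdef : ∀ i, μ i = max (lam i - θ) 0)
    (hμsum : ∑ i, μ i = 1)
    (Q : Matrix (Fin n) (Fin n) ℝ)
    (hQ : Q = ∑ i, μ i • Matrix.vecMulVec (v i) (v i))
    (Z : Matrix (Fin n) (Fin n) ℝ) (hZ : Z ∈ spectrahedron n) :
    (∑ a, ∑ b, (M - Q) a b * (Z - Q) a b) ≤ 0 := by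
  set z : Fin n → ℝ := fun i => ∑ a, ∑ b, (v i a * v i b) * Z a b with hzdef
  have hz0 : ∀ i, 0 ≤ z i := by
    intro i
    have h := hZ.1.dotProduct_mulVec_nonneg (v i)
    have he : star (v i) ⬝ᵥ Z.mulVec (v i) = z i := by
      simp only [hzdef, dotProduct, Matrix.mulVec, Pi.star_apply, star_trivial,
        Finset.mul_sum]
      exact Finset.sum_congr rfl fun a _ => Finset.sum_congr rfl fun b _ => by ring
    rw [← he]
    exact_mod_cast h
  have hzsum : (∑ i, z i) = 1 := by
    rw [hzdef]
    rw [← sum_swap3 fun i a b => (v i a * v i b) * Z a b]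
    calc (∑ a, ∑ b, ∑ i, (v i a * v i b) * Z a b)
        = ∑ a, ∑ b, (if a = b then (1:ℝ) else 0) * Z a b := by
          refine Finset.sum_congr rfl fun a _ => Finset.sum_congr rfl fun b _ => ?_
          rw [← Finset.sum_mul, horth2 a b]
      _ = ∑ a, Z a a := by
          refine Finset.sum_congr rfl fun a _ => ?_
          simp [ite_mul, Finset.sum_ite_eq]
      _ = 1 := by simpa [Matrix.trace, Matrix.diag] using hZ.2
  have hq : ∀ i, (∑ a, ∑ b, (v i a * v i b) * Q a b) = μ i := by
    intro i
    have hQab : ∀ a b, Q a b = ∑ j, μ j * (v j a * v j b) := by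
      intro a b
      rw [hQ]
      simp [Matrix.sum_apply, Matrix.vecMulVec_apply]
    calc (∑ a, ∑ b, (v i a * v i b) * Q a b)
        = ∑ a, ∑ b, ∑ j, μ j * ((v i a * v j a) * (v i b * v j b)) := by
          refine Finset.sum_congr rfl fun a _ => Finset.sum_congr rfl fun b _ => ?_
          rw [hQab, Finset.mul_sum]
          exact Finset.sum_congr rfl fun j _ => by ring
      _ = ∑ j, ∑ a, ∑ b, μ j * ((v i a * v j a) * (v i b * v j b)) :=
          sum_swap3 _
      _ = ∑ j, μ j * ((∑ a, v i a * v j a) * (∑ b, v i b * v j b)) := by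
          refine Finset.sum_congr rfl fun j _ => ?_
          rw [Finset.sum_mul_sum, Finset.mul_sum]
          refine Finset.sum_congr rfl fun a _ => ?_
          rw [Finset.mul_sum]
      _ = μ i := by
          simp_rw [horth i]
          simp [ite_mul, mul_ite, Finset.sum_ite_eq]
  have hMQ : M - Q = ∑ i, (lam i - μ i) • Matrix.vecMulVec (v i) (v i) := by
    rw [hMeq, hQ, ← Finset.sum_sub_distrib]
    exact Finset.sum_congr rfl fun i _ => (sub_smul _ _ _).symm
  rw [hMQ, ip_sum_smul]
  have hsplit : ∀ i, (∑ a, ∑ b, Matrix.vecMulVec (v i) (v i) a b * (Z - Q) a b)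
      = z i - μ i := by
    intro i
    rw [← hq i, hzdef, ← Finset.sum_sub_distrib]
    refine Finset.sum_congr rfl fun a _ => ?_
    rw [← Finset.sum_sub_distrib]
    refine Finset.sum_congr rfl fun b _ => ?_
    simp only [Matrix.sub_apply, Matrix.vecMulVec_apply]
    ring
  simp_rw [hsplit]
  have hterm : ∀ i, (lam i - μ i) * (z i - μ i) ≤ θ * z i - θ * μ i := by
    intro i
    have h1 : lam i - μ i ≤ θ := by
      have := le_max_left (lam i - θ) 0
      rw [hμdef i]
      linarith
    have h2 : (lam i - μ i) * μ i = θ * μ i := by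
      rcases le_or_gt (lam i - θ) 0 with h | h
      · rw [hμdef i, max_eq_right h]; ring
      · rw [hμdef i, max_eq_left h.le]; ring
    nlinarith [hz0 i]
  calc (∑ i, (lam i - μ i) * (z i - μ i))
      ≤ ∑ i, (θ * z i - θ * μ i) := Finset.sum_le_sum fun i _ => hterm i
    _ = θ * (∑ i, z i) - θ * (∑ i, μ i) := by
        rw [Finset.sum_sub_distrib, ← Finset.mul_sum, ← Finset.mul_sum]
    _ = 0 := by rw [hzsum, hμsum]; ring

/-- if the projection onto the spectrahedron has rank r, then it is
determined by the top r eigenvalues/eigenvectors of M. -/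
theorem stmt2 (n r : ℕ) (hr : 1 ≤ r) (hrn : r ≤ n)
    (M : Matrix (Fin n) (Fin n) ℝ) (hM : M.IsSymm)
    (lam : Fin n → ℝ) (v : Fin n → Fin n → ℝ)
    (hdecomp : IsEigenDecomp M lam v)
    (P : Matrix (Fin n) (Fin n) ℝ)
    (hP : IsProjOn (spectrahedron n) M P)
    (hrank : P.rank = r) :
    (∃! lambda : ℝ, ∑ i : Fin r, (lam (Fin.castLE hrn i) - lambda) = 1) ∧
      ∀ lambda : ℝ, (∑ i : Fin r, (lam (Fin.castLE hrn i) - lambda) = 1) →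
        P = ∑ i : Fin r, (lam (Fin.castLE hrn i) - lambda) •
          Matrix.vecMulVec (v (Fin.castLE hrn i)) (v (Fin.castLE hrn i)) := by
  classical
  obtain ⟨hanti, horth, hMeq⟩ := hdecomp
  obtain ⟨hPSmem, hPmin⟩ := hP
  have hn : 0 < n := lt_of_lt_of_le hr hrn
  -- existence of the threshold θ
  obtain ⟨θ, hθ⟩ : ∃ θ : ℝ, ∑ i : Fin n, max (lam i - θ) 0 = 1 := by
    set i0 : Fin n := ⟨0, hn⟩
    set f : ℝ → ℝ := fun θ => ∑ i : Fin n, max (lam i - θ) 0 with hf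
    have hcont : ContinuousOn f (Set.Icc (lam i0 - 1) (lam i0)) := by
      apply Continuous.continuousOn
      apply continuous_finset_sum
      intro i _
      exact (continuous_const.sub continuous_id).max continuous_const
    have hfb : f (lam i0) = 0 := by
      apply Finset.sum_eq_zero
      intro i _
      have : lam i ≤ lam i0 := hanti (by simp [i0, Fin.le_def])
      simp [max_eq_right, sub_nonpos.mpr this]
    have hfa : 1 ≤ f (lam i0 - 1) := by
      have h1 : max (lam i0 - (lam i0 - 1)) 0 = 1 := by norm_num
      calc (1:ℝ) = max (lam i0 - (lam i0 - 1)) 0 := h1.symm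
        _ ≤ f (lam i0 - 1) :=
          Finset.single_le_sum (f := fun i => max (lam i - (lam i0 - 1)) 0)
            (fun i _ => le_max_right _ _) (Finset.mem_univ i0)
    have hmem : (1:ℝ) ∈ Set.Icc (f (lam i0)) (f (lam i0 - 1)) := ⟨by rw [hfb]; norm_num, hfa⟩
    obtain ⟨θ, -, hθ⟩ := intermediate_value_Icc' (by linarith) hcont hmem
    exact ⟨θ, hθ⟩
  set μ : Fin n → ℝ := fun i => max (lam i - θ) 0 with hμd
  have hμdef : ∀ i, μ i = max (lam i - θ) 0 := fun i => rfl
  have hμsum : ∑ i, μ i = 1 := hθ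
  have hμ0 : ∀ i, 0 ≤ μ i := fun i => le_max_right _ _
  have hμanti : Antitone μ := fun i j hij =>
    max_le_max (sub_le_sub_right (hanti hij) θ) le_rfl
  -- the candidate matrix Q and its structure
  set W : Matrix (Fin n) (Fin n) ℝ := Matrix.of v with hW
  set Q : Matrix (Fin n) (Fin n) ℝ := ∑ i, μ i • Matrix.vecMulVec (v i) (v i) with hQ
  have hWWT : W * Wᵀ = 1 := by
    ext i j
    simp [Matrix.mul_apply, Matrix.one_apply, hW, horth i j]
  have hWTW : Wᵀ * W = 1 := mul_eq_one_comm.mp hWWT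
  have horth2 : ∀ a b, (∑ i, v i a * v i b) = if a = b then (1:ℝ) else 0 := by
    intro a b
    have h := congrFun (congrFun hWTW a) b
    simpa [Matrix.mul_apply, Matrix.one_apply, hW] using h
  have hdetW : IsUnit W.det := by
    apply IsUnit.of_mul_eq_one Wᵀ.det
    rw [← Matrix.det_mul, hWWT, Matrix.det_one]
  have hQfact : Q = Wᵀ * Matrix.diagonal μ * W := by
    ext a b
    rw [hQ, Matrix.mul_apply]
    simp only [Matrix.mul_diagonal, Matrix.transpose_apply, Matrix.sum_apply, Matrix.smul_apply,
      Matrix.vecMulVec_apply, smul_eq_mul, hW, Matrix.of_apply]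
    exact Finset.sum_congr rfl fun i _ => by ring
  have hpsd : Q.PosSemidef := by
    rw [hQfact]
    exact (Matrix.posSemidef_diagonal_iff.mpr hμ0).conjTranspose_mul_mul_same W
  have htrace : Q.trace = 1 := by
    have htr : ∀ i : Fin n, (Matrix.vecMulVec (v i) (v i)).trace = 1 := by
      intro i
      have h := horth i i
      simp only [if_pos rfl] at h
      simpa [Matrix.trace, Matrix.diag, Matrix.vecMulVec_apply] using h
    rw [hQ, Matrix.trace_sum]
    simp_rw [Matrix.trace_smul, htr, smul_eq_mul, mul_one]
    exact hμsum
  have hQS : Q ∈ spectrahedron n := ⟨hpsd, htrace⟩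
  -- combine the two variational inequalities to get Q = P
  have h1 := var_ineq M P hPSmem hPmin Q hQS
  have h2 := var_ineq_Q M lam v horth horth2 hMeq θ μ hμdef hμsum Q hQ P hPSmem
  have hPQ : Q = P := by
    have hid : (∑ a, ∑ b, ((Q - P) a b)^2)
        = (∑ a, ∑ b, (M - P) a b * (Q - P) a b)
          + (∑ a, ∑ b, (M - Q) a b * (P - Q) a b) := by
      rw [← Finset.sum_add_distrib]
      refine Finset.sum_congr rfl fun a _ => ?_
      rw [← Finset.sum_add_distrib]
      refine Finset.sum_congr rfl fun b _ => ?_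
      simp only [Matrix.sub_apply]
      ring
    have hzero : (∑ a, ∑ b, ((Q - P) a b)^2) = 0 :=
      le_antisymm (by rw [hid]; linarith)
        (Finset.sum_nonneg fun a _ => Finset.sum_nonneg fun b _ => sq_nonneg _)
    ext a b
    have ha := (Finset.sum_eq_zero_iff_of_nonneg
      (fun a _ => Finset.sum_nonneg fun b _ => sq_nonneg _)).mp hzero a (Finset.mem_univ a)
    have hb := (Finset.sum_eq_zero_iff_of_nonneg
      (fun b _ => sq_nonneg _)).mp ha b (Finset.mem_univ b)
    have h3 := pow_eq_zero_iff (n := 2) (by norm_num) |>.mp hb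
    have h4 : Q a b - P a b = 0 := by simpa [Matrix.sub_apply] using h3
    linarith
  -- rank computation
  have hrankQ : (Finset.univ.filter fun i => μ i ≠ 0).card = r := by
    have hq1 : Q.rank = r := by rw [hPQ]; exact hrank
    rw [hQfact, Matrix.rank_mul_eq_left_of_isUnit_det W _ hdetW,
      Matrix.rank_mul_eq_right_of_isUnit_det Wᵀ _ (by rwa [Matrix.det_transpose]),
      Matrix.rank_diagonal] at hq1
    rw [← hq1, Fintype.card_subtype]
  -- support characterization
  have hsupp : ∀ i : Fin n, μ i ≠ 0 ↔ (i : ℕ) < r := by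
    intro i
    constructor
    · intro hi
      by_contra hge
      push_neg at hge
      have hsub : Finset.Iic i ⊆ Finset.univ.filter (fun j => μ j ≠ 0) := by
        intro j hj
        rw [Finset.mem_filter]
        refine ⟨Finset.mem_univ j, ?_⟩
        have hji : μ i ≤ μ j := hμanti (Finset.mem_Iic.mp hj)
        have : 0 < μ i := lt_of_le_of_ne (hμ0 i) (Ne.symm hi)
        exact ne_of_gt (lt_of_lt_of_le this hji)
      have hcard := Finset.card_le_card hsub
      rw [Fin.card_Iic, hrankQ] at hcard
      omega
    · intro hi
      by_contra h0
      have hsub : Finset.univ.filter (fun j => μ j ≠ 0) ⊆ Finset.Iio i := by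
        intro j hj
        rw [Finset.mem_filter] at hj
        rw [Finset.mem_Iio]
        by_contra hj2
        push_neg at hj2
        exact hj.2 (le_antisymm (h0 ▸ hμanti hj2) (hμ0 j))
      have hcard := Finset.card_le_card hsub
      rw [Fin.card_Iio, hrankQ] at hcard
      omega
  have hμeq : ∀ i : Fin n, (i : ℕ) < r → μ i = lam i - θ := by
    intro i h
    have hne := (hsupp i).mpr h
    rcases le_or_gt (lam i - θ) 0 with hc | hc
    · exfalso; exact hne (by rw [hμdef i, max_eq_right hc])
    · rw [hμdef i, max_eq_left hc.le]
  have hμzero : ∀ i : Fin n, r ≤ (i : ℕ) → μ i = 0 := by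
    intro i h
    by_contra hne
    exact absurd ((hsupp i).mp hne) (by omega)
  -- sums over the range
  set L : ℕ → ℝ := fun k => if h : k < n then lam ⟨k, h⟩ else 0 with hL
  have hcast : ∀ i : Fin r, lam (Fin.castLE hrn i) = L i.val := by
    intro i
    rw [hL]
    simp only
    rw [dif_pos (lt_of_lt_of_le i.isLt hrn)]
    rfl
  have hsum_formula : ∀ x : ℝ, (∑ i : Fin r, (lam (Fin.castLE hrn i) - x))
      = (∑ k ∈ Finset.range r, L k) - r * x := by
    intro x
    have e1 : (∑ i : Fin r, (lam (Fin.castLE hrn i) - x)) = ∑ i : Fin r, (L i.val - x) :=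
      Finset.sum_congr rfl fun i _ => by rw [hcast]
    rw [e1, Fin.sum_univ_eq_sum_range (fun k => L k - x) r, Finset.sum_sub_distrib,
      Finset.sum_const, Finset.card_range, nsmul_eq_mul]
  set G : ℕ → ℝ := fun k => if h : k < n then μ ⟨k, h⟩ else 0 with hG
  have hg1 : ∑ i : Fin n, μ i = ∑ k ∈ Finset.range n, G k := by
    rw [← Fin.sum_univ_eq_sum_range G n]
    refine Finset.sum_congr rfl fun i _ => ?_
    simp [hG, i.isLt]
  have hg2 : ∑ k ∈ Finset.range n, G k = ∑ k ∈ Finset.range r, G k := by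
    symm
    apply Finset.sum_subset (Finset.range_subset_range.mpr hrn)
    intro k hk hk2
    rw [Finset.mem_range] at hk hk2
    simp only [hG, dif_pos hk]
    exact hμzero ⟨k, hk⟩ (by simpa using not_lt.mp hk2)
  have hg3 : ∀ k ∈ Finset.range r, G k = L k - θ := by
    intro k hk
    rw [Finset.mem_range] at hk
    have hkn : k < n := lt_of_lt_of_le hk hrn
    simp only [hG, hL, dif_pos hkn]
    exact hμeq ⟨k, hkn⟩ (by simpa using hk)
  have hθ1 : ∑ k ∈ Finset.range r, (L k - θ) = 1 := by
    rw [← Finset.sum_congr rfl hg3, ← hg2, ← hg1, hμsum]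
  have hθr : (∑ i : Fin r, (lam (Fin.castLE hrn i) - θ)) = 1 := by
    rw [hsum_formula θ, ← hθ1, Finset.sum_sub_distrib, Finset.sum_const, Finset.card_range,
      nsmul_eq_mul]
  have huniq : ∀ x : ℝ, (∑ i : Fin r, (lam (Fin.castLE hrn i) - x)) = 1 → x = θ := by
    intro x hx
    rw [hsum_formula] at hx
    have h5 := hθr
    rw [hsum_formula] at h5
    have hrne : (r:ℝ) ≠ 0 := Nat.cast_ne_zero.mpr (by omega)
    have h6 : (r:ℝ) * x = (r:ℝ) * θ := by linarith
    exact mul_left_cancel₀ hrne h6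
  -- the final matrix identity for θ
  set F : ℕ → Matrix (Fin n) (Fin n) ℝ :=
    fun k => if h : k < n then μ ⟨k, h⟩ • Matrix.vecMulVec (v ⟨k, h⟩) (v ⟨k, h⟩) else 0 with hF
  have e1 : Q = ∑ k ∈ Finset.range n, F k := by
    rw [hQ, ← Fin.sum_univ_eq_sum_range F n]
    refine Finset.sum_congr rfl fun i _ => ?_
    simp [hF, i.isLt]
  have e2 : ∑ k ∈ Finset.range n, F k = ∑ k ∈ Finset.range r, F k := by
    symm
    apply Finset.sum_subset (Finset.range_subset_range.mpr hrn)
    intro k hk hk2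
    rw [Finset.mem_range] at hk hk2
    simp only [hF, dif_pos hk]
    rw [hμzero ⟨k, hk⟩ (by simpa using not_lt.mp hk2), zero_smul]
  have e3 : (∑ i : Fin r, (lam (Fin.castLE hrn i) - θ) •
        Matrix.vecMulVec (v (Fin.castLE hrn i)) (v (Fin.castLE hrn i)))
      = ∑ k ∈ Finset.range r, F k := by
    refine (Finset.sum_congr rfl fun i _ => ?_).trans (Fin.sum_univ_eq_sum_range F r)
    have hkn : (i : ℕ) < n := lt_of_lt_of_le i.isLt hrn
    simp only [hF, dif_pos hkn]
    rw [hμeq ⟨i, hkn⟩ (by simpa using i.isLt)]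
    rfl
  have hfinal : P = ∑ i : Fin r, (lam (Fin.castLE hrn i) - θ) •
      Matrix.vecMulVec (v (Fin.castLE hrn i)) (v (Fin.castLE hrn i)) := by
    rw [← hPQ, e1, e2, e3]
  refine ⟨⟨θ, hθr, fun y hy => huniq y hy⟩, fun lambda hlam => ?_⟩
  rw [huniq lambda hlam]
  exact hfinal

end LRSGD
end

section
/- Let f : 𝕊^n → ℝ be convex and differentiable, and let X* be a minimizer of f over the spectrahedron S_n with rank(X*) = r. Let V* ∈ ℝ^{n×r} be a matrix whose columns form an orthonormal basis of eigenvectors spanning the range of X*. Then ⟨V* V*ᵀ, ∇f(X*)⟩ = r · λ_n(∇f(X*)), where ⟨A, B⟩ = Tr(A Bᵀ) is the trace inner product. -/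
open scoped BigOperators
open MeasureTheory
open scoped Matrix

namespace LRSGD

lemma frobInner_eq_sum {n : ℕ} (A B : Matrix (Fin n) (Fin n) ℝ) :
    frobInner A B = ∑ i, ∑ j, A i j * B i j := by
  simp [frobInner, Matrix.trace, Matrix.mul_apply, Matrix.transpose_apply]

lemma deriv_nonneg_of_min' {φ : ℝ → ℝ} {c : ℝ}
    (hdv : HasDerivAt φ c 0) (h : ∀ t ∈ Set.Ioc (0:ℝ) 1, φ 0 ≤ φ t) : 0 ≤ c := by
  have hs : Filter.Tendsto (slope φ 0) (nhdsWithin 0 {(0:ℝ)}ᶜ) (nhds c) :=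
    hasDerivAt_iff_tendsto_slope.mp hdv
  have hs' : Filter.Tendsto (slope φ 0) (nhdsWithin (0:ℝ) (Set.Ioi 0)) (nhds c) :=
    hs.mono_left (nhdsWithin_mono _ (fun x hx => ne_of_gt hx))
  refine ge_of_tendsto hs' ?_
  have hmem : Set.Ioc (0:ℝ) 1 ∈ nhdsWithin (0:ℝ) (Set.Ioi 0) := by
    rw [← Set.Ioi_inter_Iic]
    exact Filter.inter_mem self_mem_nhdsWithin
      (nhdsWithin_le_nhds (Iic_mem_nhds one_pos))
  filter_upwards [hmem] with t ht
  simp only [slope_def_field]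
  rw [div_nonneg_iff]
  exact Or.inl ⟨by simpa [sub_nonneg] using h t ht, by simpa [sub_nonneg] using ht.1.le⟩

/-- ⟨V*V*ᵀ, ∇f(X*)⟩ = r·λ_n(∇f(X*)). -/
theorem stmt5 (n r : ℕ) (hr : 1 ≤ r) (hrn : r ≤ n) (hn : 1 ≤ n)
    (f : Matrix (Fin n) (Fin n) ℝ → ℝ)
    (g : Matrix (Fin n) (Fin n) ℝ → Matrix (Fin n) (Fin n) ℝ)
    (hconv : ConvexOn ℝ Set.univ f) (hgrad : IsGradient f g)
    (Xstar : Matrix (Fin n) (Fin n) ℝ)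
    (hmin : IsMinimizerOn f (spectrahedron n) Xstar)
    (hrank : Xstar.rank = r)
    (V : Matrix (Fin n) (Fin r) ℝ)
    (horth : Vᵀ * V = 1)
    (d : Fin r → ℝ) (hd : ∀ i, 0 < d i)
    (hXdecomp : Xstar = V * Matrix.diagonal d * Vᵀ)
    (mu : Fin n → ℝ) (w : Fin n → Fin n → ℝ)
    (hmu : IsEigenDecomp (g Xstar) mu w) :
    frobInner (V * Vᵀ) (g Xstar) = (r : ℝ) * mu ⟨n - 1, by omega⟩ := by
  obtain ⟨hmono, hwort, hGdec⟩ := hmu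
  set G := g Xstar with hG
  set N : Fin n := ⟨n - 1, by omega⟩ with hN
  -- column orthonormality of w
  have hw2 : ∀ a b, (∑ k, w k a * w k b) = if a = b then (1:ℝ) else 0 := by
    have hWWt : (Matrix.of w) * (Matrix.of w)ᵀ = 1 := by
      ext i j
      simp only [Matrix.mul_apply, Matrix.transpose_apply, Matrix.of_apply, Matrix.one_apply]
      exact hwort i j
    have hWtW : (Matrix.of w)ᵀ * (Matrix.of w) = 1 := mul_eq_one_comm.mp hWWt
    intro a b
    have h := congrFun (congrFun hWtW a) b
    simpa [Matrix.mul_apply, Matrix.transpose_apply, Matrix.one_apply] using h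
  -- column orthonormality of V
  have hv : ∀ i j : Fin r, (∑ k, V k i * V k j) = if i = j then (1:ℝ) else 0 := by
    intro i j
    have h := congrFun (congrFun horth i) j
    simpa [Matrix.mul_apply, Matrix.transpose_apply, Matrix.one_apply] using h
  -- quadratic form
  set Q : (Fin n → ℝ) → ℝ := fun u => ∑ a, ∑ b, G a b * (u a * u b) with hQdef
  have hGab : ∀ a b, G a b = ∑ k, mu k * (w k a * w k b) := by
    intro a b
    rw [hGdec]
    simp [Matrix.sum_apply, Matrix.vecMulVec_apply]
  have hQ : ∀ u : Fin n → ℝ, Q u = ∑ k, mu k * (∑ a, w k a * u a)^2 := by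
    intro u
    calc Q u = ∑ a, ∑ b, ∑ k, mu k * (w k a * w k b) * (u a * u b) := by
          simp only [hQdef]
          exact Finset.sum_congr rfl fun a _ => Finset.sum_congr rfl fun b _ => by
            rw [hGab a b, Finset.sum_mul]
      _ = ∑ a, ∑ k, ∑ b, mu k * (w k a * w k b) * (u a * u b) := by
          exact Finset.sum_congr rfl fun a _ => Finset.sum_comm
      _ = ∑ k, ∑ a, ∑ b, mu k * (w k a * w k b) * (u a * u b) := Finset.sum_comm
      _ = ∑ k, mu k * (∑ a, w k a * u a)^2 := by
          refine Finset.sum_congr rfl fun k _ => ?_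
          rw [sq, Finset.sum_mul_sum, Finset.mul_sum]
          refine Finset.sum_congr rfl fun a _ => ?_
          rw [Finset.mul_sum]
          exact Finset.sum_congr rfl fun b _ => by ring
  have hPar : ∀ u : Fin n → ℝ, (∑ k, (∑ a, w k a * u a)^2) = ∑ a, (u a)^2 := by
    intro u
    calc (∑ k, (∑ a, w k a * u a)^2)
        = ∑ k, ∑ a, ∑ b, (w k a * w k b) * (u a * u b) := by
          refine Finset.sum_congr rfl fun k _ => ?_
          rw [sq, Finset.sum_mul_sum]
          exact Finset.sum_congr rfl fun a _ => Finset.sum_congr rfl fun b _ => by ring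
      _ = ∑ a, ∑ k, ∑ b, (w k a * w k b) * (u a * u b) := Finset.sum_comm
      _ = ∑ a, ∑ b, ∑ k, (w k a * w k b) * (u a * u b) := by
          exact Finset.sum_congr rfl fun a _ => Finset.sum_comm
      _ = ∑ a, ∑ b, (if a = b then (1:ℝ) else 0) * (u a * u b) := by
          refine Finset.sum_congr rfl fun a _ => Finset.sum_congr rfl fun b _ => ?_
          rw [← Finset.sum_mul, hw2 a b]
      _ = ∑ a, (u a)^2 := by
          refine Finset.sum_congr rfl fun a _ => ?_
          simp [ite_mul, sq]
  have hmuk : ∀ k, mu N ≤ mu k := by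
    intro k
    refine hmono ?_
    rw [Fin.le_def]
    exact Nat.le_sub_one_of_lt k.2
  have hQlow : ∀ u : Fin n → ℝ, (∑ a, (u a)^2) = 1 → mu N ≤ Q u := by
    intro u hu
    rw [hQ]
    calc mu N = mu N * ∑ k, (∑ a, w k a * u a)^2 := by rw [hPar, hu, mul_one]
      _ = ∑ k, mu N * (∑ a, w k a * u a)^2 := Finset.mul_sum _ _ _
      _ ≤ ∑ k, mu k * (∑ a, w k a * u a)^2 :=
          Finset.sum_le_sum fun k _ => mul_le_mul_of_nonneg_right (hmuk k) (sq_nonneg _)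
  have hQwN : Q (w N) = mu N := by
    rw [hQ]
    calc (∑ k, mu k * (∑ a, w k a * w N a)^2)
        = ∑ k, mu k * (if k = N then (1:ℝ) else 0)^2 := by
          exact Finset.sum_congr rfl fun k _ => by rw [hwort k N]
      _ = mu N := by simp
  -- Z0
  set Z0 : Matrix (Fin n) (Fin n) ℝ := Matrix.vecMulVec (w N) (w N) with hZ0
  have hZ0mem : Z0 ∈ spectrahedron n := by
    constructor
    · refine Matrix.posSemidef_iff_dotProduct_mulVec.mpr ⟨?_, ?_⟩
      · ext i j
        simp only [Matrix.conjTranspose_apply, Matrix.vecMulVec_apply, star_trivial, hZ0]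
        ring
      · intro x
        have hc : (star x) ⬝ᵥ (Z0 *ᵥ x) = (∑ a, w N a * x a)^2 := by
          rw [sq, Finset.sum_mul_sum]
          simp only [hZ0, dotProduct, Matrix.mulVec, Matrix.vecMulVec_apply,
            star_trivial, dotProduct]
          exact Finset.sum_congr rfl fun a _ => by
            rw [Finset.mul_sum]
            exact Finset.sum_congr rfl fun b _ => by ring
        rw [hc]
        exact sq_nonneg _
    · show Z0.trace = 1
      have : Z0.trace = ∑ a, w N a * w N a := by
        simp [hZ0, Matrix.trace, Matrix.vecMulVec_apply]
      rw [this, hwort N N]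
      simp
  -- first-order optimality
  have hopt : ∀ Z ∈ spectrahedron n, frobInner G Xstar ≤ frobInner G Z := by
    intro Z hZ
    have hdv : HasDerivAt (fun t : ℝ => f (Xstar + t • (Z - Xstar)))
        (frobInner G (Z - Xstar)) 0 := hgrad Xstar (Z - Xstar)
    have hge : ∀ t ∈ Set.Ioc (0:ℝ) 1,
        (fun t : ℝ => f (Xstar + t • (Z - Xstar))) 0 ≤
        (fun t : ℝ => f (Xstar + t • (Z - Xstar))) t := by
      intro t ht
      have h1 : Xstar + t • (Z - Xstar) = (1 - t) • Xstar + t • Z := by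
        rw [smul_sub, sub_smul, one_smul]
        abel
      have hmem : Xstar + t • (Z - Xstar) ∈ spectrahedron n := by
        rw [h1]
        have hXp := hmin.1.1
        have hZp := hZ.1
        have ht1 : (0:ℝ) ≤ 1 - t := by linarith [ht.2]
        have ht0 : (0:ℝ) ≤ t := ht.1.le
        refine ⟨Matrix.posSemidef_iff_dotProduct_mulVec.mpr ⟨?_, ?_⟩, ?_⟩
        · ext i j
          simp only [Matrix.conjTranspose_apply, Matrix.add_apply, Matrix.smul_apply,
            smul_eq_mul, star_trivial]
          have e1 : Xstar j i = Xstar i j := by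
            conv_lhs => rw [← hXp.1]
            simp [Matrix.conjTranspose_apply]
          have e2 : Z j i = Z i j := by
            conv_lhs => rw [← hZp.1]
            simp [Matrix.conjTranspose_apply]
          rw [e1, e2]
        · intro x
          rw [Matrix.add_mulVec, Matrix.smul_mulVec, Matrix.smul_mulVec,
            dotProduct_add, dotProduct_smul, dotProduct_smul]
          have h1 := hXp.dotProduct_mulVec_nonneg x
          have h2 := hZp.dotProduct_mulVec_nonneg x
          simp only [smul_eq_mul]
          exact add_nonneg (mul_nonneg ht1 h1) (mul_nonneg ht0 h2)
        · show Matrix.trace _ = 1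
          rw [Matrix.trace_add, Matrix.trace_smul, Matrix.trace_smul, hmin.1.2, hZ.2]
          simp
      have := hmin.2 _ hmem
      simpa using this
    have h0 : 0 ≤ frobInner G (Z - Xstar) := deriv_nonneg_of_min' hdv hge
    have hlin : frobInner G (Z - Xstar) = frobInner G Z - frobInner G Xstar := by
      simp only [frobInner_eq_sum, Matrix.sub_apply, mul_sub]
      rw [← Finset.sum_sub_distrib]
      exact Finset.sum_congr rfl fun i _ => by rw [Finset.sum_sub_distrib]
    linarith
  -- q values
  set q : Fin r → ℝ := fun i => Q (fun k => V k i) with hq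
  have hA : frobInner (V * Vᵀ) G = ∑ i, q i := by
    calc frobInner (V * Vᵀ) G = ∑ a, ∑ b, (∑ i, V a i * V b i) * G a b := by
          rw [frobInner_eq_sum]
          exact Finset.sum_congr rfl fun a _ => Finset.sum_congr rfl fun b _ => by
            simp [Matrix.mul_apply, Matrix.transpose_apply]
      _ = ∑ a, ∑ b, ∑ i, G a b * (V a i * V b i) := by
          refine Finset.sum_congr rfl fun a _ => Finset.sum_congr rfl fun b _ => ?_
          rw [Finset.sum_mul]
          exact Finset.sum_congr rfl fun i _ => by ring
      _ = ∑ a, ∑ i, ∑ b, G a b * (V a i * V b i) :=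
          Finset.sum_congr rfl fun a _ => Finset.sum_comm
      _ = ∑ i, ∑ a, ∑ b, G a b * (V a i * V b i) := Finset.sum_comm
      _ = ∑ i, q i := rfl
  have hXab : ∀ a b, Xstar a b = ∑ i, d i * (V a i * V b i) := by
    intro a b
    rw [hXdecomp, Matrix.mul_apply]
    simp only [Matrix.mul_diagonal, Matrix.transpose_apply]
    exact Finset.sum_congr rfl fun j _ => by ring
  have hX : frobInner G Xstar = ∑ i, d i * q i := by
    calc frobInner G Xstar = ∑ a, ∑ b, ∑ i, d i * (G a b * (V a i * V b i)) := by
          rw [frobInner_eq_sum]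
          refine Finset.sum_congr rfl fun a _ => Finset.sum_congr rfl fun b _ => ?_
          rw [hXab a b, Finset.mul_sum]
          exact Finset.sum_congr rfl fun i _ => by ring
      _ = ∑ a, ∑ i, ∑ b, d i * (G a b * (V a i * V b i)) :=
          Finset.sum_congr rfl fun a _ => Finset.sum_comm
      _ = ∑ i, ∑ a, ∑ b, d i * (G a b * (V a i * V b i)) := Finset.sum_comm
      _ = ∑ i, d i * q i := by
          refine Finset.sum_congr rfl fun i _ => ?_
          rw [Finset.mul_sum]
          exact Finset.sum_congr rfl fun a _ => (Finset.mul_sum _ _ _).symm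
  have htr : (∑ i, d i) = 1 := by
    have h1 : Xstar.trace = ∑ i, d i := by
      rw [Matrix.trace]
      calc (∑ a, Xstar.diag a) = ∑ a, ∑ i, d i * (V a i * V a i) :=
            Finset.sum_congr rfl fun a _ => hXab a a
        _ = ∑ i, ∑ a, d i * (V a i * V a i) := Finset.sum_comm
        _ = ∑ i, d i := by
            refine Finset.sum_congr rfl fun i _ => ?_
            rw [← Finset.mul_sum]
            have h2 := hv i i
            simp only [if_pos] at h2
            rw [h2, mul_one]
    rw [← h1, hmin.1.2]
  -- Z0 value
  have hZ0val : frobInner G Z0 = mu N := by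
    rw [← hQwN]
    rw [frobInner_eq_sum]
    exact Finset.sum_congr rfl fun a _ => Finset.sum_congr rfl fun b _ => by
      simp [hZ0, Matrix.vecMulVec_apply]
  have hqi : ∀ i, mu N ≤ q i := by
    intro i
    refine hQlow _ ?_
    have h2 := hv i i
    simp only [if_pos] at h2
    rw [← h2]
    exact Finset.sum_congr rfl fun a _ => by rw [sq]
  have hsum_le : (∑ i, d i * q i) ≤ mu N := by
    rw [← hX, ← hZ0val]
    exact hopt Z0 hZ0mem
  have hsum_ge : mu N ≤ ∑ i, d i * q i := by
    calc mu N = ∑ i, d i * mu N := by rw [← Finset.sum_mul, htr, one_mul]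
      _ ≤ ∑ i, d i * q i :=
          Finset.sum_le_sum fun i _ => mul_le_mul_of_nonneg_left (hqi i) (hd i).le
  have heqsum : (∑ i, d i * q i) = mu N := le_antisymm hsum_le hsum_ge
  have hzero : (∑ i, d i * (q i - mu N)) = 0 := by
    simp only [mul_sub]
    rw [Finset.sum_sub_distrib, heqsum, ← Finset.sum_mul, htr, one_mul, sub_self]
  have hqeq := (Finset.sum_eq_zero_iff_of_nonneg
    (fun i _ => mul_nonneg (hd i).le (by linarith [hqi i]))).mp hzero
  have hqval : ∀ i, q i = mu N := by
    intro i
    have h := hqeq i (Finset.mem_univ i)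
    rcases mul_eq_zero.mp h with h | h
    · exact absurd h (hd i).ne'
    · linarith
  rw [hA]
  simp [hqval, Finset.sum_const, Finset.card_univ, nsmul_eq_mul]


end LRSGD
end

section
/- Let X ∈ S_n with rank(X) ≤ r (1 ≤ r < n), let V ∈ ℝ^{n×r} be a matrix with orthonormal columns whose columns are eigenvectors of X spanning its range (extended arbitrarily with orthonormal vectors if rank(X) < r), let ∇̃ ∈ 𝕊^n, η > 0, and set Y = X − η∇̃. Then λ_{r+1}(Y) ≤ η(⟨VVᵀ, ∇̃⟩ − Σ_{i=1}^{r+1} λ_{n−i+1}(∇̃)), where ⟨A, B⟩ = Tr(A Bᵀ). -/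
open scoped BigOperators
open MeasureTheory
open scoped Matrix

namespace LRSGD

noncomputable def dp {n : ℕ} (x y : Fin n → ℝ) : ℝ := ∑ k, x k * y k

lemma dp_comm {n : ℕ} (x y : Fin n → ℝ) : dp x y = dp y x :=
  Finset.sum_congr rfl fun k _ => mul_comm _ _

lemma dp_sum_right {n m : ℕ} (x : Fin n → ℝ) (c : Fin m → ℝ) (e : Fin m → Fin n → ℝ) :
    dp x (fun k => ∑ i, c i * e i k) = ∑ i, c i * dp x (e i) := by
  unfold dp
  simp only [Finset.mul_sum]
  rw [Finset.sum_comm]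
  refine Finset.sum_congr rfl fun i _ => ?_
  exact Finset.sum_congr rfl fun k _ => by ring

lemma dp_smul_right {n : ℕ} (a : ℝ) (x y : Fin n → ℝ) :
    dp x (a • y) = a * dp x y := by
  unfold dp
  rw [Finset.mul_sum]
  refine Finset.sum_congr rfl fun k _ => ?_
  simp [Pi.smul_apply, smul_eq_mul]; ring

lemma dp_smul_left {n : ℕ} (a : ℝ) (x y : Fin n → ℝ) :
    dp (a • x) y = a * dp x y := by
  rw [dp_comm, dp_smul_right, dp_comm]

/-- quadratic form -/
noncomputable def qf {n : ℕ} (M : Matrix (Fin n) (Fin n) ℝ) (x : Fin n → ℝ) : ℝ :=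
  ∑ a, ∑ b, x a * M a b * x b

lemma qform {n m : ℕ} {M : Matrix (Fin n) (Fin n) ℝ} {lam : Fin m → ℝ}
    {v : Fin m → Fin n → ℝ}
    (h : M = ∑ i, lam i • Matrix.vecMulVec (v i) (v i)) (x : Fin n → ℝ) :
    qf M x = ∑ i, lam i * (dp x (v i)) ^ 2 := by
  subst h
  have entry : ∀ a b, (∑ i, lam i • Matrix.vecMulVec (v i) (v i)) a b
      = ∑ i, lam i * (v i a * v i b) := by
    intro a b
    simp [Matrix.sum_apply, Matrix.vecMulVec_apply]
  unfold qf
  calc ∑ a, ∑ b, x a * (∑ i, lam i • Matrix.vecMulVec (v i) (v i)) a b * x b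
      = ∑ a, ∑ b, ∑ i, lam i * ((x a * v i a) * (x b * v i b)) := by
        refine Finset.sum_congr rfl fun a _ => Finset.sum_congr rfl fun b _ => ?_
        rw [entry, Finset.mul_sum, Finset.sum_mul]
        exact Finset.sum_congr rfl fun i _ => by ring
    _ = ∑ a, ∑ i, ∑ b, lam i * ((x a * v i a) * (x b * v i b)) :=
        Finset.sum_congr rfl fun a _ => Finset.sum_comm
    _ = ∑ i, ∑ a, ∑ b, lam i * ((x a * v i a) * (x b * v i b)) := Finset.sum_comm
    _ = ∑ i, lam i * (dp x (v i)) ^ 2 := by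
        refine Finset.sum_congr rfl fun i _ => ?_
        unfold dp
        rw [pow_two, Finset.sum_mul_sum Finset.univ Finset.univ
          (fun a => x a * v i a) (fun b => x b * v i b)]
        simp only [Finset.mul_sum]

lemma bessel {m n : ℕ} (e : Fin m → Fin n → ℝ)
    (he : ∀ i j, dp (e i) (e j) = if i = j then 1 else 0)
    (x : Fin n → ℝ) : ∑ i, (dp (e i) x) ^ 2 ≤ dp x x := by
  set c : Fin m → ℝ := fun i => dp (e i) x with hc
  set p : Fin n → ℝ := fun k => x k - ∑ i, c i * e i k with hp
  have h1 : dp p p = dp x x - ∑ i, c i ^ 2 := by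
    have hx : dp p x = dp x x - ∑ i, c i ^ 2 := by
      have : dp x p = dp x x - ∑ i, c i ^ 2 := by
        have : dp x p = dp x x - dp x (fun k => ∑ i, c i * e i k) := by
          unfold dp
          rw [← Finset.sum_sub_distrib]
          refine Finset.sum_congr rfl fun k _ => by simp [hp]; ring
        rw [this, dp_sum_right]
        congr 1
        refine Finset.sum_congr rfl fun i _ => ?_
        simp only [hc]
        rw [dp_comm x (e i), pow_two]
      rw [dp_comm, this]
    have hs : dp p (fun k => ∑ i, c i * e i k) = 0 := by
      rw [dp_sum_right]
      refine Finset.sum_eq_zero fun i _ => ?_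
      have hpe : dp p (e i) = 0 := by
        have : dp p (e i) = dp x (e i) - ∑ j, c j * dp (e j) (e i) := by
          have : dp p (e i) = dp x (e i) - dp (fun k => ∑ j, c j * e j k) (e i) := by
            unfold dp
            rw [← Finset.sum_sub_distrib]
            refine Finset.sum_congr rfl fun k _ => by simp [hp]; ring
          rw [this]
          congr 1
          rw [dp_comm, dp_sum_right]
          refine Finset.sum_congr rfl fun j _ => by rw [dp_comm]
        rw [this]
        simp only [he]
        simp [hc, dp_comm x (e i)]
      rw [hpe, mul_zero]
    have : dp p p = dp p x - dp p (fun k => ∑ i, c i * e i k) := by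
      unfold dp
      rw [← Finset.sum_sub_distrib]
      refine Finset.sum_congr rfl fun k _ => by simp [hp]; ring
    rw [this, hs, hx, sub_zero]
  have h2 : 0 ≤ dp p p := Finset.sum_nonneg fun k _ => mul_self_nonneg _
  have h3 : ∑ i, (dp (e i) x) ^ 2 = ∑ i, c i ^ 2 := rfl
  rw [h3]; linarith

lemma parseval {n : ℕ} (w : Fin n → Fin n → ℝ)
    (hw : ∀ i j, dp (w i) (w j) = if i = j then 1 else 0)
    (x : Fin n → ℝ) : ∑ k, (dp x (w k)) ^ 2 = dp x x := by
  have hWWt : (Matrix.of w) * (Matrix.of w)ᵀ = 1 := by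
    ext i j
    simpa [Matrix.mul_apply, Matrix.one_apply, dp] using hw i j
  have hWtW : (Matrix.of w)ᵀ * (Matrix.of w) = 1 := by
    rw [mul_eq_one_comm] at hWWt; exact hWWt
  have hcol : ∀ a b, (∑ k, w k a * w k b) = if a = b then (1:ℝ) else 0 := by
    intro a b
    have := congrFun (congrFun hWtW a) b
    simpa [Matrix.mul_apply, Matrix.one_apply] using this
  unfold dp
  have : ∀ k, (∑ a, x a * w k a) ^ 2 = ∑ a, ∑ b, (x a * w k a) * (x b * w k b) := by
    intro k
    rw [pow_two, Finset.sum_mul_sum Finset.univ Finset.univ (fun a => x a * w k a) (fun b => x b * w k b)]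
  simp only [this]
  rw [Finset.sum_comm]
  calc ∑ a, ∑ k, ∑ b, (x a * w k a) * (x b * w k b)
      = ∑ a, ∑ b, x a * x b * ∑ k, w k a * w k b := by
        refine Finset.sum_congr rfl fun a _ => ?_
        rw [Finset.sum_comm]
        refine Finset.sum_congr rfl fun b _ => ?_
        rw [Finset.mul_sum]
        refine Finset.sum_congr rfl fun k _ => by ring
    _ = ∑ a, x a * x a := by
        refine Finset.sum_congr rfl fun a _ => ?_
        simp only [hcol]
        simp [Finset.sum_ite_eq]

lemma sum_tail {n m : ℕ} (hmn : m ≤ n) (f : Fin n → ℝ) :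
    ∑ i : Fin m, f ⟨n - 1 - (i : ℕ), by have := i.2; omega⟩
      = ∑ j ∈ Finset.univ.filter (fun j : Fin n => n - m ≤ (j : ℕ)), f j := by
  refine Finset.sum_bij'
    (fun (i : Fin m) (_ : i ∈ Finset.univ) =>
      (⟨n - 1 - (i : ℕ), by have := i.2; omega⟩ : Fin n))
    (fun (j : Fin n) (hj : j ∈ Finset.univ.filter (fun j : Fin n => n - m ≤ (j : ℕ))) =>
      (⟨n - 1 - (j : ℕ), by
        have h1 := (Finset.mem_filter.mp hj).2
        have h2 := j.2
        omega⟩ : Fin m))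
    ?_ ?_ ?_ ?_ ?_
  · intro a _
    simp only [Finset.mem_filter, Finset.mem_univ, true_and]
    have := a.2; omega
  · intro a _
    exact Finset.mem_univ _
  · intro a _
    have := a.2
    ext
    simp only []
    omega
  · intro a ha
    have h1 := (Finset.mem_filter.mp ha).2
    have := a.2
    ext
    simp only []
    omega
  · intro a _
    rfl

lemma chebyshev_tail {n m : ℕ} (hm : 1 ≤ m) (hmn : m ≤ n) (lam : Fin n → ℝ)
    (hlam : Antitone lam) (t : Fin n → ℝ) (ht0 : ∀ i, 0 ≤ t i) (ht1 : ∀ i, t i ≤ 1)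
    (hsum : ∑ i, t i = m) :
    ∑ i : Fin m, lam ⟨n - 1 - (i : ℕ), by have := i.2; omega⟩ ≤ ∑ i, lam i * t i := by
  set θ := lam ⟨n - m, by omega⟩ with hθ
  set g : Fin n → ℝ := fun i => if n - m ≤ (i : ℕ) then 1 else 0 with hg
  have hgsum : ∑ i, g i = m := by
    have h := sum_tail hmn (fun _ : Fin n => (1 : ℝ))
    simp only [hg]
    rw [← Finset.sum_filter, ← h]
    simp
  have h1 : ∑ i : Fin m, lam ⟨n - 1 - (i : ℕ), by have := i.2; omega⟩ = ∑ i, lam i * g i := by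
    rw [sum_tail hmn lam, Finset.sum_filter]
    refine Finset.sum_congr rfl fun i _ => ?_
    by_cases h : n - m ≤ (i : ℕ)
    · have hgi : g i = 1 := by simp only [hg]; exact if_pos h
      rw [if_pos h, hgi, mul_one]
    · have hgi : g i = 0 := by simp only [hg]; exact if_neg h
      rw [if_neg h, hgi, mul_zero]
  have key : ∀ i : Fin n, θ * (t i - g i) ≤ lam i * (t i - g i) := by
    intro i
    by_cases h : n - m ≤ (i : ℕ)
    · have hg1 : g i = 1 := by simp only [hg]; exact if_pos h
      have hle : lam i ≤ θ := by
        refine hlam ?_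
        simp only [Fin.le_def]
        exact h
      nlinarith [ht1 i]
    · have hg0 : g i = 0 := by simp only [hg]; exact if_neg h
      have hle : θ ≤ lam i := by
        refine hlam ?_
        simp only [Fin.le_def]
        omega
      nlinarith [ht0 i]
  have hA : ∑ i, θ * (t i - g i) = 0 := by
    rw [← Finset.mul_sum, Finset.sum_sub_distrib, hsum, hgsum]
    ring
  have hB : ∑ i, lam i * (t i - g i) = ∑ i, lam i * t i - ∑ i, lam i * g i := by
    rw [← Finset.sum_sub_distrib]
    exact Finset.sum_congr rfl fun i _ => by ring
  have hC := Finset.sum_le_sum (fun i (_ : i ∈ Finset.univ) => key i)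
  rw [h1]
  rw [hA, hB] at hC
  linarith

/-- upper bound on λ_{r+1}(Y) for Y = X − η∇̃. -/
theorem stmt10 (n r : ℕ) (hr : 1 ≤ r) (hrn : r < n)
    (X : Matrix (Fin n) (Fin n) ℝ)
    (hXS : X ∈ spectrahedron n) (hrankX : X.rank ≤ r)
    (V : Matrix (Fin n) (Fin r) ℝ) (horth : Vᵀ * V = 1)
    (d : Fin r → ℝ) (hXdecomp : X = V * Matrix.diagonal d * Vᵀ)
    (D : Matrix (Fin n) (Fin n) ℝ) (hDsymm : D.IsSymm)
    (lamD : Fin n → ℝ) (w : Fin n → Fin n → ℝ)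
    (hlamD : IsEigenDecomp D lamD w)
    (η : ℝ) (hη : 0 < η)
    (lamY : Fin n → ℝ) (wY : Fin n → Fin n → ℝ)
    (hlamY : IsEigenDecomp (X - η • D) lamY wY) :
    lamY ⟨r, hrn⟩ ≤
      η * (frobInner (V * Vᵀ) D -
        ∑ i : Fin (r + 1), lamD ⟨n - 1 - (i : ℕ), by have := i.2; omega⟩) := by
  obtain ⟨hD_anti, hD_orth, hD_eq⟩ := hlamD
  obtain ⟨hY_anti, hY_orth, hY_eq⟩ := hlamY
  have hworth : ∀ i j, dp (w i) (w j) = if i = j then 1 else 0 := fun i j => by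
    unfold dp; exact hD_orth i j
  have hwYorth : ∀ i j, dp (wY i) (wY j) = if i = j then 1 else 0 := fun i j => by
    unfold dp; exact hY_orth i j
  set col : Fin r → Fin n → ℝ := fun j k => V k j with hcol
  have hcolorth : ∀ j j', dp (col j) (col j') = if j = j' then 1 else 0 := by
    intro j j'
    have h := congrFun (congrFun horth j) j'
    simpa [Matrix.mul_apply, Matrix.one_apply, dp, Matrix.transpose_apply, hcol] using h
  set emb : Fin (r + 1) → Fin n := fun i => ⟨(i : ℕ), by have := i.2; omega⟩ with hemb
  -- linear dependence of the r+1 vectors Vᵀ (wY (emb i)) in ℝ^r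
  set A : Fin (r + 1) → (Fin r → ℝ) := fun i j => dp (col j) (wY (emb i)) with hA
  have hnli : ¬ LinearIndependent ℝ A := by
    intro h
    have hcard := h.fintype_card_le_finrank
    rw [Module.finrank_pi] at hcard
    simp [Fintype.card_fin] at hcard
  obtain ⟨c, hcsum, i0, hci0⟩ := Fintype.not_linearIndependent_iff.mp hnli
  set u : Fin n → ℝ := fun k => ∑ i, c i * wY (emb i) k with hu
  have hcolu : ∀ j, dp (col j) u = 0 := by
    intro j
    rw [hu, dp_sum_right (col j) c (fun i => wY (emb i))]
    have h := congrFun hcsum j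
    simpa [hA, Finset.sum_apply, Pi.smul_apply, smul_eq_mul] using h
  have hwYu_lo : ∀ i : Fin (r + 1), dp (wY (emb i)) u = c i := by
    intro i
    rw [hu, dp_sum_right (wY (emb i)) c (fun i => wY (emb i))]
    have hterm : ∀ i' : Fin (r + 1),
        c i' * dp (wY (emb i)) (wY (emb i')) = if i = i' then c i' else 0 := by
      intro i'
      rw [hwYorth]
      by_cases h : emb i = emb i'
      · have hii : i = i' := by
          have hv : ((emb i : Fin n) : ℕ) = ((emb i' : Fin n) : ℕ) := congrArg Fin.val h
          simp only [hemb] at hv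
          exact Fin.ext hv
        rw [if_pos h, if_pos hii, mul_one]
      · have hii : ¬ i = i' := fun hh => h (by rw [hh])
        rw [if_neg h, if_neg hii, mul_zero]
    simp only [hterm]
    simp [Finset.sum_ite_eq]
  have hwYu_hi : ∀ jj : Fin n, r < (jj : ℕ) → dp (wY jj) u = 0 := by
    intro jj hjj
    rw [hu, dp_sum_right (wY jj) c (fun i => wY (emb i))]
    refine Finset.sum_eq_zero fun i _ => ?_
    rw [hwYorth, if_neg, mul_zero]
    intro h
    have : (jj : ℕ) = (i : ℕ) := congrArg Fin.val h
    have := i.2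
    omega
  set s : ℝ := dp u u with hsdef
  have hs : 0 < s := by
    have hpar := parseval wY hwYorth u
    have hterm : (c i0) ^ 2 = (dp u (wY (emb i0))) ^ 2 := by rw [dp_comm, hwYu_lo i0]
    have h1 : (c i0) ^ 2 ≤ s := by
      rw [hsdef, ← hpar, hterm]
      exact Finset.single_le_sum (f := fun k => (dp u (wY k)) ^ 2)
        (fun k _ => sq_nonneg _) (Finset.mem_univ (emb i0))
    have h2 : 0 < (c i0) ^ 2 :=
      lt_of_le_of_ne (sq_nonneg _) (Ne.symm (pow_ne_zero 2 hci0))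
    linarith
  set a : ℝ := (Real.sqrt s)⁻¹ with hadef
  set uh : Fin n → ℝ := a • u with huh
  have hsq : Real.sqrt s ≠ 0 := ne_of_gt (Real.sqrt_pos.mpr hs)
  have ha : a * (a * s) = 1 := by
    rw [hadef]
    field_simp
    rw [Real.sq_sqrt hs.le]
  have hduu : dp uh uh = 1 := by
    rw [huh, dp_smul_left, dp_smul_right, ← hsdef, ha]
  have hcoluh : ∀ j, dp (col j) uh = 0 := fun j => by
    rw [huh, dp_smul_right, hcolu, mul_zero]
  have huhwY_hi : ∀ jj : Fin n, r < (jj : ℕ) → dp uh (wY jj) = 0 := fun jj h => by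
    rw [huh, dp_smul_left, dp_comm u, hwYu_hi jj h, mul_zero]
  -- quadratic form computations
  have hqY : qf (X - η • D) uh = ∑ jj, lamY jj * (dp uh (wY jj)) ^ 2 := qform hY_eq uh
  have hqD : qf D uh = ∑ k, lamD k * (dp uh (w k)) ^ 2 := qform hD_eq uh
  have hXvec : X = ∑ j : Fin r, d j • Matrix.vecMulVec (col j) (col j) := by
    rw [hXdecomp]
    ext i b
    simp only [Matrix.mul_apply, Matrix.diagonal_apply, Matrix.transpose_apply,
      Matrix.sum_apply, Matrix.smul_apply, Matrix.vecMulVec_apply, smul_eq_mul, hcol]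
    refine Finset.sum_congr rfl fun j _ => ?_
    rw [show (∑ x1, V i x1 * if x1 = j then d x1 else 0) = V i j * d j from by
      simp [mul_ite, Finset.sum_ite_eq']]
    ring
  have hqX : qf X uh = 0 := by
    rw [qform hXvec uh]
    refine Finset.sum_eq_zero fun j _ => ?_
    rw [dp_comm, hcoluh]
    simp
  have hqlin : qf (X - η • D) uh = qf X uh - η * qf D uh := by
    unfold qf
    have hterm : ∀ i b : Fin n, uh i * (X - η • D) i b * uh b
        = uh i * X i b * uh b - η * (uh i * D i b * uh b) := by
      intro i b
      simp only [Matrix.sub_apply, Matrix.smul_apply, smul_eq_mul]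
      ring
    simp only [hterm, Finset.sum_sub_distrib, Finset.mul_sum]
  -- lower bound
  have hlow : lamY ⟨r, hrn⟩ ≤ qf (X - η • D) uh := by
    rw [hqY]
    have hpar := parseval wY hwYorth uh
    calc lamY ⟨r, hrn⟩ = lamY ⟨r, hrn⟩ * ∑ jj, (dp uh (wY jj)) ^ 2 := by
          rw [hpar, hduu, mul_one]
      _ = ∑ jj, lamY ⟨r, hrn⟩ * (dp uh (wY jj)) ^ 2 := Finset.mul_sum _ _ _
      _ ≤ ∑ jj, lamY jj * (dp uh (wY jj)) ^ 2 := by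
          refine Finset.sum_le_sum fun jj _ => ?_
          by_cases h : (jj : ℕ) ≤ r
          · refine mul_le_mul_of_nonneg_right ?_ (sq_nonneg _)
            exact hY_anti (by simpa [Fin.le_def] using h)
          · rw [huhwY_hi jj (by omega)]
            simp
  -- Ky Fan part
  set t : Fin n → ℝ := fun k => (∑ j : Fin r, (dp (col j) (w k)) ^ 2) + (dp uh (w k)) ^ 2
    with ht
  have ht0 : ∀ k, 0 ≤ t k := fun k =>
    add_nonneg (Finset.sum_nonneg fun j _ => sq_nonneg _) (sq_nonneg _)
  have ht1 : ∀ k, t k ≤ 1 := by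
    intro k
    set f : Fin (r + 1) → Fin n → ℝ := Fin.snoc col uh with hf
    have hforth : ∀ i j, dp (f i) (f j) = if i = j then 1 else 0 := by
      intro i j
      induction i using Fin.lastCases with
      | last =>
        induction j using Fin.lastCases with
        | last => simp [hf, Fin.snoc_last, hduu]
        | cast j =>
          rw [hf]
          simp only [Fin.snoc_last, Fin.snoc_castSucc]
          rw [dp_comm, hcoluh, if_neg (Fin.ne_last_of_lt (Fin.castSucc_lt_last j)).symm]
      | cast i =>
        induction j using Fin.lastCases with
        | last =>
          rw [hf]
          simp only [Fin.snoc_last, Fin.snoc_castSucc]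
          rw [hcoluh, if_neg (Fin.ne_last_of_lt (Fin.castSucc_lt_last i))]
        | cast j =>
          rw [hf]
          simp only [Fin.snoc_castSucc]
          rw [hcolorth]
          congr 1
          simp [Fin.castSucc_inj]
    have hb := bessel f hforth (w k)
    rw [Fin.sum_univ_castSucc] at hb
    simp only [hf, Fin.snoc_castSucc, Fin.snoc_last] at hb
    have hw1 : dp (w k) (w k) = 1 := by rw [hworth]; simp
    rw [hw1] at hb
    rw [ht]
    exact hb
  have hsumt : ∑ k, t k = ((r + 1 : ℕ) : ℝ) := by
    rw [ht]
    rw [Finset.sum_add_distrib, Finset.sum_comm]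
    have h1 : ∀ j : Fin r, ∑ k, (dp (col j) (w k)) ^ 2 = 1 := by
      intro j
      rw [parseval w hworth (col j), hcolorth]
      simp
    have h2 : ∑ k, (dp uh (w k)) ^ 2 = 1 := by rw [parseval w hworth uh, hduu]
    simp only [h1, h2, Finset.sum_const, Finset.card_univ, Fintype.card_fin, nsmul_eq_mul,
      mul_one]
    push_cast
    ring
  have hfrob : frobInner (V * Vᵀ) D = ∑ k, lamD k * (∑ j, (dp (col j) (w k)) ^ 2) := by
    rw [hD_eq]
    unfold frobInner
    rw [Matrix.transpose_sum, Matrix.mul_sum, Matrix.trace_sum]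
    refine Finset.sum_congr rfl fun k _ => ?_
    rw [Matrix.transpose_smul, Matrix.mul_smul, Matrix.trace_smul, smul_eq_mul]
    congr 1
    unfold Matrix.trace
    simp only [Matrix.diag_apply, Matrix.mul_apply, Matrix.transpose_apply,
      Matrix.vecMulVec_apply]
    calc ∑ i, ∑ b, (∑ j, V i j * V b j) * (w k i * w k b)
        = ∑ i, ∑ b, ∑ j, (V i j * w k i) * (V b j * w k b) := by
          refine Finset.sum_congr rfl fun i _ => Finset.sum_congr rfl fun b _ => ?_
          rw [Finset.sum_mul]
          refine Finset.sum_congr rfl fun j _ => by ring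
      _ = ∑ i, ∑ j, ∑ b, (V i j * w k i) * (V b j * w k b) :=
          Finset.sum_congr rfl fun i _ => Finset.sum_comm
      _ = ∑ j, ∑ i, ∑ b, (V i j * w k i) * (V b j * w k b) := Finset.sum_comm
      _ = ∑ j, (dp (col j) (w k)) ^ 2 := by
          refine Finset.sum_congr rfl fun j _ => ?_
          rw [pow_two]
          rw [show dp (col j) (w k) = ∑ i, V i j * w k i from rfl]
          rw [Finset.sum_mul_sum Finset.univ Finset.univ
            (fun i => V i j * w k i) (fun b => V b j * w k b)]
  have hkyfan := chebyshev_tail (by omega) (by omega) lamD hD_anti t ht0 ht1 hsumt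
  have hsplit : ∑ k, lamD k * t k
      = frobInner (V * Vᵀ) D + qf D uh := by
    rw [hfrob, hqD, ← Finset.sum_add_distrib]
    refine Finset.sum_congr rfl fun k _ => ?_
    rw [ht]
    ring
  have hfin : ∑ i : Fin (r + 1), lamD ⟨n - 1 - (i : ℕ), by have := i.2; omega⟩
      - frobInner (V * Vᵀ) D ≤ qf D uh := by
    rw [hsplit] at hkyfan
    linarith
  have h1 : lamY ⟨r, hrn⟩ ≤ -(η * qf D uh) := by
    rw [hqlin, hqX] at hlow
    linarith
  have h2 : -(η * qf D uh) ≤ η * (frobInner (V * Vᵀ) D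
      - ∑ i : Fin (r + 1), lamD ⟨n - 1 - (i : ℕ), by have := i.2; omega⟩) := by
    nlinarith [mul_nonneg hη.le (by linarith :
      (0:ℝ) ≤ qf D uh - (∑ i : Fin (r + 1), lamD ⟨n - 1 - (i : ℕ), by have := i.2; omega⟩
        - frobInner (V * Vᵀ) D))]
  linarith

end LRSGD
end
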